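/- arXiv:math/0508624 — 6 statements merged into one kernel-verified Lean document; each statement's English description precedes it below -/
import Mathlib

section
/- Let γ be a simple path in an open set U ⊆ ℝ² with γ(0) = a, γ(1) = b, and suppose the diameter of the image of γ is less than ε. Then for every positive integer n there exists a simple polygonal path in U from a to b of diameter less than (1 + 1/2^{n-1})·ε. -/
/-- A polygonal path on `[0,1]`: piecewise linear with finitely many segments
(at uniformly spaced breakpoints `i/n`). -/
def IsPolygonalPath (γ : ℝ → ℂ) : Prop :=
  ∃ n : ℕ, 0 < n ∧ ∀ i : ℕ, i < n → ∀ t ∈ Set.Icc ((i : ℝ) / n) ((i + 1 : ℝ) / n),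
    γ t = γ ((i : ℝ) / n) + ((n : ℝ) * t - (i : ℝ)) • (γ ((i + 1 : ℝ) / n) - γ ((i : ℝ) / n))

open Set

/-- Piecewise-linear interpolation through points `p 0, p 1, p 2, ...`,
parametrized at unit speed per segment. -/
noncomputable def pfun (p : ℕ → ℂ) (t : ℝ) : ℂ :=
  p ⌊t⌋₊ + (t - ⌊t⌋₊) • (p (⌊t⌋₊ + 1) - p ⌊t⌋₊)

lemma pfun_nat (p : ℕ → ℂ) (k : ℕ) : pfun p k = p k := by
  simp [pfun]

lemma pfun_eval (p : ℕ → ℂ) (i : ℕ) {t : ℝ} (h1 : (i:ℝ) ≤ t) (h2 : t ≤ i+1) :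
    pfun p t = p i + (t - i) • (p (i+1) - p i) := by
  rcases lt_or_eq_of_le h2 with h | h
  · have hfl : ⌊t⌋₊ = i := by
      rw [Nat.floor_eq_iff (le_trans (Nat.cast_nonneg i) h1)]
      exact ⟨h1, by exact_mod_cast h⟩
    simp [pfun, hfl]
  · have hc : t = ((i+1 : ℕ) : ℝ) := by push_cast; linarith
    rw [hc, pfun_nat]
    push_cast
    have : (t - i) = 1 := by rw [hc]; push_cast; ring
    rw [show ((i:ℝ)+1) - i = (1:ℝ) by ring, one_smul]
    ring

lemma pfun_mem_segment (p : ℕ → ℂ) (i : ℕ) {t : ℝ} (h1 : (i:ℝ) ≤ t) (h2 : t ≤ i+1) :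
    pfun p t ∈ segment ℝ (p i) (p (i+1)) := by
  rw [pfun_eval p i h1 h2, segment_eq_image']
  exact ⟨t - i, ⟨by linarith, by linarith⟩, rfl⟩

/-- Decomposition of a point of `[0,n]` into segment index and offset. -/
lemma decomp {n : ℕ} (hn : 1 ≤ n) {t : ℝ} (h0 : 0 ≤ t) (h1 : t ≤ n) :
    min ⌊t⌋₊ (n-1) < n ∧ ((min ⌊t⌋₊ (n-1) : ℕ) : ℝ) ≤ t ∧
      t ≤ ((min ⌊t⌋₊ (n-1) : ℕ) : ℝ) + 1 := by
  have hfl : (⌊t⌋₊ : ℝ) ≤ t := Nat.floor_le h0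
  have hlt : t < ⌊t⌋₊ + 1 := Nat.lt_floor_add_one t
  rcases le_total ⌊t⌋₊ (n-1) with h | h
  · rw [min_eq_left h]
    exact ⟨by omega, hfl, hlt.le⟩
  · rw [min_eq_right h]
    have h2 : ((n-1 : ℕ) : ℝ) ≤ (⌊t⌋₊ : ℝ) := by exact_mod_cast h
    have h3 : ((n-1 : ℕ) : ℝ) = (n:ℝ) - 1 := by
      rw [Nat.cast_sub hn]; norm_num
    exact ⟨by omega, le_trans h2 hfl, by rw [h3]; linarith⟩

lemma pfun_image_subset {S : Set ℂ} {n : ℕ} (hn : 1 ≤ n) {p : ℕ → ℂ}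
    (hseg : ∀ k < n, segment ℝ (p k) (p (k+1)) ⊆ S) {t : ℝ} (h0 : 0 ≤ t) (h1 : t ≤ n) :
    pfun p t ∈ S := by
  obtain ⟨hi, hl, hr⟩ := decomp hn h0 h1
  exact hseg _ hi (pfun_mem_segment p _ hl hr)

/-- distance from a point of a segment to an endpoint. -/
lemma dist_le_of_mem_seg {x y z : ℂ} (hz : z ∈ segment ℝ x y) : dist z x ≤ dist x y := by
  rw [segment_eq_image'] at hz
  obtain ⟨θ, hθ, rfl⟩ := hz
  rw [dist_eq_norm, add_sub_cancel_left, norm_smul, dist_eq_norm, norm_sub_rev x y, Real.norm_eq_abs]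
  have : |θ| ≤ 1 := abs_le.2 ⟨by linarith [hθ.1], hθ.2⟩
  calc |θ| * ‖y - x‖ ≤ 1 * ‖y - x‖ := by
        apply mul_le_mul_of_nonneg_right this (norm_nonneg _)
    _ = ‖y - x‖ := one_mul _

section Surgery

variable {S : Set ℂ} {a b : ℂ} {n : ℕ} {p : ℕ → ℂ}

/-- Delete the vertex `i+1`, assuming the shortcut segment `[p i, p (i+2)]` lies in `S`. -/
lemma surgeryDel (hp0 : p 0 = a) (hpn : p n = b)
    (hseg : ∀ k < n, segment ℝ (p k) (p (k+1)) ⊆ S)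
    {i : ℕ} (hi : i + 1 < n) (hdel : segment ℝ (p i) (p (i+2)) ⊆ S) :
    ∃ q : ℕ → ℂ, q 0 = a ∧ q (n-1) = b ∧
      (∀ k < n-1, segment ℝ (q k) (q (k+1)) ⊆ S) := by
  refine ⟨fun k => if k ≤ i then p k else p (k+1), by simpa using hp0, ?_, ?_⟩
  · simp only [show ¬ (n - 1 ≤ i) by omega, if_false]
    rw [show n - 1 + 1 = n by omega]; exact hpn
  · intro k hk
    simp only []
    split_ifs with h1 h2 h2
    · exact hseg k (by omega)
    · rw [show k = i by omega, show i + 1 + 1 = i + 2 by omega]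
      exact hdel
    · omega
    · rw [show k + 1 + 1 = (k+1) + 1 by omega]
      exact hseg (k+1) (by omega)

/-- Cut out the part between a point `x` on segment `i` and the same point on segment `j`. -/
lemma surgeryCut (hp0 : p 0 = a) (hpn : p n = b)
    (hseg : ∀ k < n, segment ℝ (p k) (p (k+1)) ⊆ S)
    {i j : ℕ} (hij : i + 2 ≤ j) (hj : j < n) {x : ℂ}
    (hx1 : x ∈ segment ℝ (p i) (p (i+1))) (hx2 : x ∈ segment ℝ (p j) (p (j+1))) :
    ∃ q : ℕ → ℂ, q 0 = a ∧ q (n + i + 1 - j) = b ∧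
      (∀ k < n + i + 1 - j, segment ℝ (q k) (q (k+1)) ⊆ S) := by
  set m := n + i + 1 - j with hm
  have hi : i < n := by omega
  refine ⟨fun k => if k ≤ i then p k else if k = i+1 then x else p (k + (j - (i+1))),
    by simpa using hp0, ?_, ?_⟩
  · simp only [show ¬ (m ≤ i) by omega, show ¬ (m = i + 1) by omega, if_false]
    rw [show m + (j - (i+1)) = n by omega]; exact hpn
  · intro k hk
    simp only []
    split_ifs with h1 h2 h3 h4 h5 h6 h7 h8
    · exact hseg k (by omega)
    · rw [show k = i by omega]
      exact fun z hz =>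
        hseg i hi ((convex_segment _ _).segment_subset (left_mem_segment _ _ _) hx1 hz)
    · omega
    · omega
    · omega
    · rw [h4, show i + 1 + 1 + (j - (i+1)) = j + 1 by omega]
      exact fun z hz =>
        hseg j hj ((convex_segment _ _).segment_subset hx2 (right_mem_segment _ _ _) hz)
    · omega
    · omega
    · rw [show k + 1 + (j - (i+1)) = (k + (j - (i+1))) + 1 by omega]
      exact hseg _ (by omega)

/-- Collapse a degenerate segment `p i = p (i+1)`. -/
lemma surgeryB1 (hab : a ≠ b) (hp0 : p 0 = a) (hpn : p n = b)
    (hseg : ∀ k < n, segment ℝ (p k) (p (k+1)) ⊆ S)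
    {i : ℕ} (hi : i < n) (hpi : p i = p (i+1)) :
    ∃ m : ℕ, 1 ≤ m ∧ m < n ∧ ∃ q : ℕ → ℂ, q 0 = a ∧ q m = b ∧
      (∀ k < m, segment ℝ (q k) (q (k+1)) ⊆ S) := by
  have hn2 : 2 ≤ n := by
    rcases Nat.lt_or_ge n 2 with h | h
    · exfalso
      obtain rfl : n = 1 := by omega
      obtain rfl : i = 0 := by omega
      exact hab (hp0 ▸ hpn ▸ hpi)
    · exact h
  rcases Nat.lt_or_ge (i+1) n with h | h
  · obtain ⟨q, h0, h1, h2⟩ := surgeryDel hp0 hpn hseg h (by rw [hpi]; exact hseg (i+1) h)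
    exact ⟨n-1, by omega, by omega, q, h0, h1, h2⟩
  · refine ⟨n-1, by omega, by omega, p, hp0, ?_, fun k hk => hseg k (by omega)⟩
    rw [show n - 1 = i by omega, hpi, show i + 1 = n by omega]; exact hpn

end Surgery

lemma decomp' {n : ℕ} (hn : 1 ≤ n) {t : ℝ} (h0 : 0 ≤ t) (h1 : t ≤ n) :
    ∃ i : ℕ, i < n ∧ (i:ℝ) ≤ t ∧ t ≤ i+1 :=
  ⟨min ⌊t⌋₊ (n-1), (decomp hn h0 h1).1, (decomp hn h0 h1).2.1, (decomp hn h0 h1).2.2⟩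

lemma reduce {S : Set ℂ} {a b : ℂ} (hab : a ≠ b) {n : ℕ} (hn : 1 ≤ n) {p : ℕ → ℂ}
    (hp0 : p 0 = a) (hpn : p n = b)
    (hseg : ∀ k < n, segment ℝ (p k) (p (k+1)) ⊆ S)
    {s t : ℝ} (hs : s ∈ Icc (0:ℝ) (n:ℝ)) (ht : t ∈ Icc (0:ℝ) (n:ℝ)) (hst : s < t)
    (heq : pfun p s = pfun p t) :
    ∃ m, 1 ≤ m ∧ m < n ∧ ∃ q : ℕ → ℂ, q 0 = a ∧ q m = b ∧
      (∀ k < m, segment ℝ (q k) (q (k+1)) ⊆ S) := by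
  obtain ⟨i, hi_n, hi_l, hi_r⟩ := decomp' hn hs.1 hs.2
  obtain ⟨j, hj_n, hj_l, hj_r⟩ := decomp' hn ht.1 ht.2
  have hij : i ≤ j := by
    have : (i:ℝ) < (j:ℝ) + 1 := lt_of_le_of_lt hi_l (lt_of_lt_of_le hst hj_r)
    have h2 : (i:ℝ) < ((j+1 : ℕ):ℝ) := by push_cast; linarith
    have h3 : i < j + 1 := by exact_mod_cast h2
    omega
  have hE : (p i : ℂ) + ((s:ℂ) - (i:ℂ)) * (p (i+1) - p i)
      = p j + ((t:ℂ) - (j:ℂ)) * (p (j+1) - p j) := by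
    have hE0 : p i + (s - (i:ℝ)) • (p (i+1) - p i)
        = p j + (t - (j:ℝ)) • (p (j+1) - p j) := by
      rw [← pfun_eval p i hi_l hi_r, ← pfun_eval p j hj_l hj_r]; exact heq
    simp only [Complex.real_smul] at hE0
    push_cast at hE0
    exact hE0
  rcases Nat.lt_or_ge (i+1) j with hcase | hcase
  · -- j ≥ i + 2 : cut surgery
    have hx1 : pfun p s ∈ segment ℝ (p i) (p (i+1)) := pfun_mem_segment p i hi_l hi_r
    have hx2 : pfun p s ∈ segment ℝ (p j) (p (j+1)) := by
      rw [heq]; exact pfun_mem_segment p j hj_l hj_r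
    obtain ⟨q, h0, h1, h2⟩ := surgeryCut hp0 hpn hseg (by omega : i + 2 ≤ j) hj_n hx1 hx2
    exact ⟨n + i + 1 - j, by omega, by omega, q, h0, h1, h2⟩
  · rcases eq_or_lt_of_le hij with rfl | hlt
    · -- same segment : degenerate
      have hz : ((t:ℂ) - (s:ℂ)) * (p (i+1) - p i) = 0 := by linear_combination -hE
      rcases mul_eq_zero.1 hz with h | h
      · exfalso
        have : (t:ℂ) = (s:ℂ) := by linear_combination h
        have : t = s := by exact_mod_cast this
        linarith
      · exact surgeryB1 hab hp0 hpn hseg hi_n (sub_eq_zero.1 h).symm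
    · -- j = i + 1 : adjacent segments
      obtain rfl : j = i + 1 := by omega
      by_cases hd1 : p i = p (i+1)
      · exact surgeryB1 hab hp0 hpn hseg hi_n hd1
      by_cases hd2 : p (i+1) = p (i+2)
      · exact surgeryB1 hab hp0 hpn hseg hj_n hd2
      set u : ℝ := (i:ℝ) + 1 - s with hu
      set v : ℝ := t - ((i:ℝ) + 1) with hv
      have hu0 : 0 ≤ u := by rw [hu]; linarith
      have hu1 : u ≤ 1 := by rw [hu]; linarith
      have hv0 : 0 ≤ v := by rw [hv]; push_cast at hj_l; linarith
      have hv1 : v ≤ 1 := by rw [hv]; push_cast at hj_r; linarith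
      have hE' : (u : ℂ) * (p i - p (i+1)) = (v:ℂ) * (p (i+2) - p (i+1)) := by
        have hE2 := hE
        simp only [show i+1+1 = i+2 from rfl] at hE2
        rw [hu, hv]
        push_cast at hE2 ⊢
        linear_combination hE2
      have hupos : 0 < u := by
        rcases eq_or_lt_of_le hu0 with h | h
        · exfalso
          rw [← h] at hE'
          simp only [Complex.ofReal_zero, zero_mul] at hE'
          rcases mul_eq_zero.1 hE'.symm with h' | h'
          · have hv' : v = 0 := by exact_mod_cast h'
            have : s = t := by rw [hu] at h; rw [hv] at hv'; linarith
            linarith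
          · exact hd2 (sub_eq_zero.1 h').symm
        · exact h
      have hvpos : 0 < v := by
        rcases eq_or_lt_of_le hv0 with h | h
        · exfalso
          rw [← h] at hE'
          simp only [Complex.ofReal_zero, zero_mul] at hE'
          rcases mul_eq_zero.1 hE' with h' | h'
          · have hu' : u = 0 := by exact_mod_cast h'
            linarith
          · exact hd1 (sub_eq_zero.1 h')
        · exact h
      have hune : (u : ℂ) ≠ 0 := by exact_mod_cast hupos.ne'
      have hvne : (v : ℂ) ≠ 0 := by exact_mod_cast hvpos.ne'
      rcases le_total v u with hcmp | hcmp
      · -- p i lies on segment (i+1)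
        have hmem : p i ∈ segment ℝ (p (i+1)) (p (i+2)) := by
          rw [segment_eq_image']
          refine ⟨v / u, ⟨by positivity, by rw [div_le_one hupos]; exact hcmp⟩, ?_⟩
          show p (i+1) + (v / u) • (p (i+2) - p (i+1)) = p i
          rw [Complex.real_smul]
          push_cast
          field_simp
          linear_combination -hE'
        have hdel : segment ℝ (p i) (p (i+2)) ⊆ S := fun z hz =>
          hseg (i+1) hj_n ((convex_segment _ _).segment_subset hmem
            (right_mem_segment _ _ _) hz)
        obtain ⟨q, h0, h1, h2⟩ := surgeryDel hp0 hpn hseg hj_n hdel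
        exact ⟨n-1, by omega, by omega, q, h0, h1, h2⟩
      · -- p (i+2) lies on segment i
        have hmem : p (i+2) ∈ segment ℝ (p i) (p (i+1)) := by
          rw [segment_symm, segment_eq_image']
          refine ⟨u / v, ⟨by positivity, by rw [div_le_one hvpos]; exact hcmp⟩, ?_⟩
          show p (i+1) + (u / v) • (p i - p (i+1)) = p (i+2)
          rw [Complex.real_smul]
          push_cast
          field_simp
          linear_combination hE'
        have hdel : segment ℝ (p i) (p (i+2)) ⊆ S := fun z hz =>
          hseg i hi_n ((convex_segment _ _).segment_subset
            (left_mem_segment _ _ _) hmem hz)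
        obtain ⟨q, h0, h1, h2⟩ := surgeryDel hp0 hpn hseg hj_n hdel
        exact ⟨n-1, by omega, by omega, q, h0, h1, h2⟩

/-- Loop-erasure: any polygonal chain admits an injective polygonal chain with the
same endpoints, inside any set containing all its segments. -/
lemma key (S : Set ℂ) (a b : ℂ) (hab : a ≠ b) :
    ∀ N n : ℕ, n ≤ N → 1 ≤ n → ∀ p : ℕ → ℂ, p 0 = a → p n = b →
    (∀ k < n, segment ℝ (p k) (p (k+1)) ⊆ S) →
    ∃ n' : ℕ, 1 ≤ n' ∧ ∃ p' : ℕ → ℂ, p' 0 = a ∧ p' n' = b ∧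
      (∀ k < n', segment ℝ (p' k) (p' (k+1)) ⊆ S) ∧
      Set.InjOn (pfun p') (Set.Icc (0:ℝ) (n' : ℝ)) := by
  intro N
  induction N with
  | zero => intro n hn h1; omega
  | succ N ih =>
    intro n hn h1 p hp0 hpn hseg
    by_cases hinj : Set.InjOn (pfun p) (Set.Icc (0:ℝ) (n:ℝ))
    · exact ⟨n, h1, p, hp0, hpn, hseg, hinj⟩
    · rw [Set.InjOn] at hinj
      push_neg at hinj
      obtain ⟨s, hs, t, ht, heq, hne⟩ := hinj
      have hred : ∃ m, 1 ≤ m ∧ m < n ∧ ∃ q : ℕ → ℂ, q 0 = a ∧ q m = b ∧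
          (∀ k < m, segment ℝ (q k) (q (k+1)) ⊆ S) := by
        rcases Ne.lt_or_gt hne with h | h
        · exact reduce hab h1 hp0 hpn hseg hs ht h heq
        · exact reduce hab h1 hp0 hpn hseg ht hs h heq.symm
      obtain ⟨m, hm1, hmn, q, hq0, hqm, hqseg⟩ := hred
      exact ih m (by omega) hm1 q hq0 hqm hqseg

lemma isPolygonalPath_pfun {n : ℕ} (hn : 0 < n) (p : ℕ → ℂ) :
    IsPolygonalPath (fun t => pfun p ((n:ℝ) * t)) := by
  have hn' : (0:ℝ) < n := by exact_mod_cast hn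
  refine ⟨n, hn, ?_⟩
  intro i hi t ht
  have e1 : (n:ℝ) * ((i:ℝ)/n) = (i:ℝ) := by field_simp
  have e2 : (n:ℝ) * (((i:ℝ)+1)/n) = ((i+1 : ℕ):ℝ) := by push_cast; field_simp
  have h1 : (i:ℝ) ≤ (n:ℝ) * t := by
    rw [← e1]; exact mul_le_mul_of_nonneg_left ht.1 hn'.le
  have h2 : (n:ℝ) * t ≤ (i:ℝ) + 1 := by
    have := mul_le_mul_of_nonneg_left ht.2 hn'.le
    calc (n:ℝ) * t ≤ (n:ℝ) * (((i:ℝ)+1)/n) := this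
      _ = (i:ℝ) + 1 := by field_simp
  simp only []
  rw [e1, e2, pfun_nat, pfun_nat, pfun_eval p i h1 h2]

/-- A simple path of diameter `< ε` in an open set `U` from `a` to `b`
can be replaced, for each positive integer `n`, by a simple polygonal path in `U`
from `a` to `b` of diameter `< (1 + 1/2^(n-1)) * ε`. -/
theorem simple_polygonal_of_simple_path (U : Set ℂ) (hU : IsOpen U)
    (γ : ℝ → ℂ) (a b : ℂ) (ε : ℝ)
    (hγc : ContinuousOn γ (Set.Icc 0 1)) (hγi : Set.InjOn γ (Set.Icc 0 1))
    (hγU : γ '' Set.Icc 0 1 ⊆ U) (h0 : γ 0 = a) (h1 : γ 1 = b)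
    (hdiam : Metric.diam (γ '' Set.Icc 0 1) < ε) :
    ∀ n : ℕ, 0 < n →
      ∃ σ : ℝ → ℂ, IsPolygonalPath σ ∧ Set.InjOn σ (Set.Icc 0 1) ∧
        σ '' Set.Icc 0 1 ⊆ U ∧ σ 0 = a ∧ σ 1 = b ∧
        Metric.diam (σ '' Set.Icc 0 1) < (1 + 1 / 2 ^ (n - 1)) * ε := by
  intro N hN
  have hab : a ≠ b := by
    intro h
    have h01 : (0:ℝ) ∈ Set.Icc (0:ℝ) 1 := by norm_num
    have h11 : (1:ℝ) ∈ Set.Icc (0:ℝ) 1 := by norm_num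
    have := hγi h01 h11 (by rw [h0, h1, h])
    norm_num at this
  have hε : 0 < ε := lt_of_le_of_lt Metric.diam_nonneg hdiam
  set r : ℝ := ε / 2 ^ (N-1) / 3 with hr
  have hrpos : 0 < r := by positivity
  set K := γ '' Set.Icc 0 1 with hK
  have hKc : IsCompact K := isCompact_Icc.image_of_continuousOn hγc
  obtain ⟨δ₀, hδ₀pos, hδ₀⟩ := hKc.exists_thickening_subset_open hU hγU
  set δ : ℝ := min δ₀ r with hδ
  have hδpos : 0 < δ := lt_min hδ₀pos hrpos
  set S : Set ℂ := U ∩ Metric.cthickening r K with hS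
  -- uniform continuity
  have huc := isCompact_Icc.uniformContinuousOn_of_continuous hγc
  rw [Metric.uniformContinuousOn_iff] at huc
  obtain ⟨η, hηpos, hη⟩ := huc δ hδpos
  obtain ⟨m₀, hm₀⟩ := exists_nat_one_div_lt hηpos
  set m : ℕ := m₀ + 1 with hm
  have hm1 : 1 ≤ m := by omega
  have hmR : (0:ℝ) < m := by exact_mod_cast hm1
  set p : ℕ → ℂ := fun k => γ ((k:ℝ) / m) with hp
  have hmem : ∀ k : ℕ, k ≤ m → ((k:ℝ)/m) ∈ Set.Icc (0:ℝ) 1 := by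
    intro k hk
    constructor
    · positivity
    · rw [div_le_one hmR]; exact_mod_cast hk
  have hp0 : p 0 = a := by simp [hp, h0]
  have hpm : p m = b := by
    have : ((m:ℝ))/m = 1 := div_self hmR.ne'
    simp [hp, this, h1]
  have hpK : ∀ k : ℕ, k ≤ m → p k ∈ K := fun k hk => ⟨(k:ℝ)/m, hmem k hk, rfl⟩
  have hdistp : ∀ k : ℕ, k < m → dist (p k) (p (k+1)) < δ := by
    intro k hk
    apply hη _ (hmem k (by omega)) _ (hmem (k+1) (by omega))
    rw [Real.dist_eq]
    have : (k:ℝ)/m - ((k+1:ℕ):ℝ)/m = -(1/m) := by push_cast; field_simp; ring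
    rw [this, abs_neg, abs_of_pos (by positivity)]
    calc 1/(m:ℝ) = 1/((m₀:ℝ)+1) := by rw [hm]; push_cast; ring_nf
      _ < η := hm₀
  have hseg : ∀ k < m, segment ℝ (p k) (p (k+1)) ⊆ S := by
    intro k hk z hz
    have hdz : dist z (p k) < δ := lt_of_le_of_lt (dist_le_of_mem_seg hz) (hdistp k hk)
    constructor
    · apply hδ₀
      rw [Metric.mem_thickening_iff]
      exact ⟨p k, hpK k (by omega), lt_of_lt_of_le hdz (min_le_left _ _)⟩
    · exact Metric.mem_cthickening_of_dist_le z (p k) r K (hpK k (by omega))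
        (le_trans hdz.le (min_le_right _ _))
  obtain ⟨n', hn'1, p', hp'0, hp'n, hp'seg, hp'inj⟩ :=
    key S a b hab m m le_rfl hm1 p hp0 hpm hseg
  have hn'R : (0:ℝ) < n' := by exact_mod_cast hn'1
  refine ⟨fun t => pfun p' ((n':ℝ) * t), isPolygonalPath_pfun hn'1 p', ?_, ?_, ?_, ?_, ?_⟩
  · intro t1 ht1 t2 ht2 heq
    have hmem1 : (n':ℝ) * t1 ∈ Set.Icc (0:ℝ) (n':ℝ) := by
      constructor
      · exact mul_nonneg hn'R.le ht1.1
      · calc (n':ℝ) * t1 ≤ (n':ℝ) * 1 := mul_le_mul_of_nonneg_left ht1.2 hn'R.le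
          _ = n' := mul_one _
    have hmem2 : (n':ℝ) * t2 ∈ Set.Icc (0:ℝ) (n':ℝ) := by
      constructor
      · exact mul_nonneg hn'R.le ht2.1
      · calc (n':ℝ) * t2 ≤ (n':ℝ) * 1 := mul_le_mul_of_nonneg_left ht2.2 hn'R.le
          _ = n' := mul_one _
    have := hp'inj hmem1 hmem2 heq
    exact mul_left_cancel₀ hn'R.ne' this
  · rintro z ⟨t, ht, rfl⟩
    have h1' : (0:ℝ) ≤ (n':ℝ) * t := mul_nonneg hn'R.le ht.1
    have h2' : (n':ℝ) * t ≤ n' := by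
      calc (n':ℝ) * t ≤ (n':ℝ) * 1 := mul_le_mul_of_nonneg_left ht.2 hn'R.le
        _ = n' := mul_one _
    exact (pfun_image_subset hn'1 hp'seg h1' h2').1
  · show pfun p' ((n':ℝ) * 0) = a
    rw [mul_zero, show (0:ℝ) = ((0:ℕ):ℝ) by norm_num, pfun_nat, hp'0]
  · show pfun p' ((n':ℝ) * 1) = b
    rw [mul_one, pfun_nat, hp'n]
  · have himg : (fun t => pfun p' ((n':ℝ) * t)) '' Set.Icc 0 1 ⊆ Metric.cthickening r K := by
      rintro z ⟨t, ht, rfl⟩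
      have h1' : (0:ℝ) ≤ (n':ℝ) * t := mul_nonneg hn'R.le ht.1
      have h2' : (n':ℝ) * t ≤ n' := by
        calc (n':ℝ) * t ≤ (n':ℝ) * 1 := mul_le_mul_of_nonneg_left ht.2 hn'R.le
          _ = n' := mul_one _
      exact (pfun_image_subset hn'1 hp'seg h1' h2').2
    have hb : Bornology.IsBounded (Metric.cthickening r K) := hKc.isBounded.cthickening
    calc Metric.diam ((fun t => pfun p' ((n':ℝ) * t)) '' Set.Icc 0 1)
        ≤ Metric.diam (Metric.cthickening r K) := Metric.diam_mono himg hb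
      _ ≤ Metric.diam K + 2 * r := Metric.diam_cthickening_le K hrpos.le
      _ < ε + 2 * r := by linarith
      _ < ε + 3 * r := by linarith
      _ = (1 + 1 / 2 ^ (N - 1)) * ε := by rw [hr]; field_simp
end

section
/- If U ⊆ ℝ² is an open connected set, F₁ = ℝ² \ U is closed with connected complement U, F₂ ⊂ U is a compact simple arc (so ℝ² \ F₂ is connected), and F₁ ∩ F₂ = ∅, then U \ F₂ = ℝ² \ (F₁ ∪ F₂) is connected. -/
open Complex Set Metric

/-- Two continuous real "arguments" of the same circle-valued function differ by a constant
on a preconnected set. -/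
lemma diff_eq_of_exp_eq {s : Set ℂ} (hs : IsPreconnected s) {g₁ g₂ : ℂ → ℝ}
    (h₁ : ContinuousOn g₁ s) (h₂ : ContinuousOn g₂ s)
    (h : ∀ z ∈ s, Complex.exp (g₁ z * Complex.I) = Complex.exp (g₂ z * Complex.I))
    {x y : ℂ} (hx : x ∈ s) (hy : y ∈ s) :
    g₁ x - g₂ x = g₁ y - g₂ y := by
  set d : ℂ → ℝ := fun z => g₁ z - g₂ z with hd_def
  have hd : ContinuousOn d s := h₁.sub h₂
  have key : ∀ z ∈ s, ∃ k : ℤ, d z = 2 * Real.pi * k := by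
    intro z hz
    obtain ⟨n, hn⟩ := Complex.exp_eq_exp_iff_exists_int.mp (h z hz)
    refine ⟨n, ?_⟩
    have him := congrArg Complex.im hn
    simp only [Complex.add_im, Complex.mul_im, Complex.ofReal_re, Complex.I_im,
      Complex.ofReal_im, Complex.I_re, Complex.intCast_re, Complex.intCast_im,
      Complex.mul_re, Complex.ofReal_mul, Complex.re_ofNat, Complex.im_ofNat] at him
    simp only [hd_def]
    nlinarith [him]
  have main : ∀ x' y' : ℂ, x' ∈ s → y' ∈ s → ∀ k l : ℤ,
      d x' = 2 * Real.pi * k → d y' = 2 * Real.pi * l → k < l → False := by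
    intro x' y' hx' hy' k l hk hl hkl
    have hmem : d x' + Real.pi ∈ Icc (d x') (d y') := by
      have h1 : (k : ℝ) + 1 ≤ l := by exact_mod_cast hkl
      constructor
      · linarith [Real.pi_pos]
      · rw [hk, hl]; nlinarith [Real.pi_pos]
    obtain ⟨z, hzs, hz⟩ := hs.intermediate_value hx' hy' hd hmem
    obtain ⟨j, hj⟩ := key z hzs
    rw [hj, hk] at hz
    have hpi : (2 * (j : ℝ)) * Real.pi = (2 * k + 1) * Real.pi := by ring_nf; ring_nf at hz; linarith
    have : (2 * (j : ℝ)) = 2 * k + 1 := mul_right_cancel₀ Real.pi_ne_zero hpi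
    have : (2 * j : ℤ) = 2 * k + 1 := by exact_mod_cast this
    omega
  obtain ⟨k, hk⟩ := key x hx
  obtain ⟨l, hl⟩ := key y hy
  rcases lt_trichotomy k l with hkl | hkl | hkl
  · exact (main x y hx hy k l hk hl hkl).elim
  · exact hk.trans (by rw [hkl]; exact hl.symm)
  · exact (main y x hy hx l k hl hk hkl).elim

/-- A continuous circle-valued function on `ℂ` has a continuous argument on any closed ball. -/
lemma exists_lift_closedBall (f : ℂ → ℂ) (hf : Continuous f)
    (habs : ∀ z, ‖f z‖ = 1) (R : ℝ) (hR : 0 ≤ R) :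
    ∃ g : ℂ → ℝ, ContinuousOn g (closedBall 0 R) ∧
      (∀ z ∈ closedBall 0 R, Complex.exp (g z * Complex.I) = f z) ∧
      g 0 = Complex.arg (f 0) := by
  have hne : ∀ z, f z ≠ 0 := by
    intro z h
    have := habs z
    rw [h] at this
    simp at this
  -- uniform continuity on the closed ball
  have huc := (isCompact_closedBall (0:ℂ) R).uniformContinuousOn_of_continuous hf.continuousOn
  rw [Metric.uniformContinuousOn_iff] at huc
  obtain ⟨δ, hδ, H⟩ := huc 1 one_pos
  obtain ⟨m₀, hm₀⟩ := exists_nat_gt (R / δ)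
  set m : ℕ := m₀ + 1 with hm_def
  have hmpos : 0 < (m : ℝ) := by positivity
  have hm0 : (m : ℝ) ≠ 0 := ne_of_gt hmpos
  have hRm : R / m < δ := by
    rw [div_lt_iff₀ hmpos]
    have hlt : R / δ < m := lt_of_lt_of_le hm₀ (by exact_mod_cast Nat.le_succ m₀)
    have h' : R < ↑m * δ := (div_lt_iff₀ hδ).mp hlt
    linarith
  set q : ℕ → ℂ → ℂ := fun j z => (((j : ℝ) / (m : ℝ) : ℝ) : ℂ) * z with hq_def
  have hqmem : ∀ z ∈ closedBall (0:ℂ) R, ∀ j ≤ m, q j z ∈ closedBall (0:ℂ) R := by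
    intro z hz j hj
    rw [mem_closedBall_zero_iff] at hz ⊢
    have h1 : (j : ℝ) / m ≤ 1 := by
      rw [div_le_one hmpos]; exact_mod_cast hj
    calc ‖q j z‖ = ((j:ℝ)/m) * ‖z‖ := by
          simp only [hq_def, norm_mul, Complex.norm_real, Real.norm_eq_abs,
            _root_.abs_of_nonneg (by positivity : (0:ℝ) ≤ (j:ℝ)/m)]
    _ ≤ 1 * ‖z‖ := by apply mul_le_mul_of_nonneg_right h1 (norm_nonneg z)
    _ ≤ R := by rwa [one_mul]
  have hclose : ∀ z ∈ closedBall (0:ℂ) R, ∀ j, j < m →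
      ‖f (q (j+1) z) / f (q j z) - 1‖ < 1 := by
    intro z hz j hj
    have h1 : q (j+1) z ∈ closedBall (0:ℂ) R := hqmem z hz (j+1) hj
    have h2 : q j z ∈ closedBall (0:ℂ) R := hqmem z hz j (le_of_lt hj)
    have hdist : dist (q (j+1) z) (q j z) < δ := by
      rw [Complex.dist_eq]
      have : q (j+1) z - q j z = ((1 / (m:ℝ) : ℝ) : ℂ) * z := by
        simp only [hq_def]
        rw [← sub_mul, ← Complex.ofReal_sub]
        congr 2
        field_simp
        push_cast; ring
      rw [this]
      rw [mem_closedBall_zero_iff] at hz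
      calc ‖(((1 / (m:ℝ) : ℝ) : ℂ) * z)‖ = (1/(m:ℝ)) * ‖z‖ := by
            rw [norm_mul, Complex.norm_real, Real.norm_eq_abs,
              _root_.abs_of_nonneg (by positivity : (0:ℝ) ≤ 1/(m:ℝ))]
      _ ≤ (1/(m:ℝ)) * R := by
            apply mul_le_mul_of_nonneg_left hz (by positivity)
      _ = R / m := by ring
      _ < δ := hRm
    have hd := H _ h1 _ h2 hdist
    rw [Complex.dist_eq] at hd
    have hab : ‖f (q j z)‖ = 1 := habs _
    rw [div_sub_one (hne _), norm_div, hab, div_one]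
    exact hd
  have hslit : ∀ w : ℂ, ‖w - 1‖ < 1 → w ∈ Complex.slitPlane := by
    intro w hw
    rw [Complex.mem_slitPlane_iff]
    left
    have := Complex.abs_re_le_norm (w - 1)
    have hre : (w - 1).re = w.re - 1 := by simp
    rw [hre] at this
    have h' := abs_lt.mp (lt_of_le_of_lt this hw)
    linarith [h'.1]
  set S : ℕ → ℂ → ℝ := fun k z => Complex.arg (f 0) +
      ∑ j ∈ Finset.range k, Complex.arg (f (q (j+1) z) / f (q j z)) with hS_def
  have hq0 : ∀ z, q 0 z = 0 := by intro z; simp [hq_def]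
  have key : ∀ k, k ≤ m → ContinuousOn (S k) (closedBall (0:ℂ) R) ∧
      ∀ z ∈ closedBall (0:ℂ) R, Complex.exp (S k z * Complex.I) = f (q k z) := by
    intro k
    induction k with
    | zero =>
      intro _
      constructor
      · simp only [hS_def, Finset.range_zero, Finset.sum_empty, add_zero]
        exact continuousOn_const
      · intro z _
        simp only [hS_def, Finset.range_zero, Finset.sum_empty, add_zero, hq0]
        have := Complex.norm_mul_exp_arg_mul_I (f 0)
        rw [habs 0, Complex.ofReal_one, one_mul] at this
        exact this
    | succ k ih =>
      intro hk
      obtain ⟨ihc, ihe⟩ := ih (le_of_lt (Nat.lt_of_succ_le hk))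
      have hkm : k < m := Nat.lt_of_succ_le hk
      have hrc : Continuous (fun z => f (q (k+1) z) / f (q k z)) := by
        apply Continuous.div
        · exact hf.comp (by fun_prop)
        · exact hf.comp (by fun_prop)
        · intro z; exact hne _
      have hterm : ContinuousOn (fun z => Complex.arg (f (q (k+1) z) / f (q k z)))
          (closedBall (0:ℂ) R) := by
        intro z hz
        have hslit' := hslit _ (hclose z hz k hkm)
        have h1 : ContinuousAt (Complex.arg ∘ (fun z => f (q (k+1) z) / f (q k z))) z :=
          ContinuousAt.comp (x := z) (g := Complex.arg)
            (f := fun z => f (q (k+1) z) / f (q k z))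
            (Complex.continuousAt_arg hslit') hrc.continuousAt
        exact h1.continuousWithinAt
      constructor
      · have : S (k+1) = fun z => S k z + Complex.arg (f (q (k+1) z) / f (q k z)) := by
          funext z
          simp only [hS_def, Finset.sum_range_succ]
          ring
        rw [this]
        exact ihc.add hterm
      · intro z hz
        have hsum : S (k+1) z = S k z + Complex.arg (f (q (k+1) z) / f (q k z)) := by
          simp only [hS_def, Finset.sum_range_succ]; ring
        rw [hsum, Complex.ofReal_add, add_mul, Complex.exp_add, ihe z hz]
        have habsr : ‖f (q (k+1) z) / f (q k z)‖ = 1 := by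
          rw [norm_div, habs, habs, div_one]
        have := Complex.norm_mul_exp_arg_mul_I (f (q (k+1) z) / f (q k z))
        rw [habsr, Complex.ofReal_one, one_mul] at this
        rw [this]
        rw [mul_comm]
        exact div_mul_cancel₀ _ (hne _)
  obtain ⟨hc, he⟩ := key m le_rfl
  have hqm : ∀ z, q m z = z := by
    intro z
    simp only [hq_def]
    rw [div_self (ne_of_gt hmpos)]
    simp
  refine ⟨S m, hc, ?_, ?_⟩
  · intro z hz
    rw [he z hz, hqm]
  · simp only [hS_def]
    have : ∀ j, Complex.arg (f (q (j+1) 0) / f (q j 0)) = 0 := by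
      intro j
      have h1 : q (j+1) (0:ℂ) = 0 := by simp [hq_def]
      have h2 : q j (0:ℂ) = 0 := by simp [hq_def]
      rw [h1, h2, div_self (hne 0), Complex.arg_one]
    simp [this]

/-- A continuous circle-valued function on `ℂ` has a global continuous argument. -/
lemma exists_lift (f : ℂ → ℂ) (hf : Continuous f) (habs : ∀ z, ‖f z‖ = 1) :
    ∃ g : ℂ → ℝ, Continuous g ∧ ∀ z, Complex.exp (g z * Complex.I) = f z := by
  choose g hg1 hg2 hg3 using fun n : ℕ => exists_lift_closedBall f hf habs n n.cast_nonneg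
  have agree : ∀ (a b : ℕ) (z : ℂ), z ∈ closedBall (0:ℂ) (a:ℝ) →
      z ∈ closedBall (0:ℂ) (b:ℝ) → g a z = g b z := by
    intro a b z hza hzb
    set c : ℝ := min (a:ℝ) (b:ℝ) with hc_def
    have hc0 : 0 ≤ c := le_min a.cast_nonneg b.cast_nonneg
    have hsub1 : closedBall (0:ℂ) c ⊆ closedBall 0 (a:ℝ) :=
      closedBall_subset_closedBall (min_le_left _ _)
    have hsub2 : closedBall (0:ℂ) c ⊆ closedBall 0 (b:ℝ) :=
      closedBall_subset_closedBall (min_le_right _ _)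
    have hconn : IsPreconnected (closedBall (0:ℂ) c) := (convex_closedBall _ _).isPreconnected
    have h0 : (0:ℂ) ∈ closedBall (0:ℂ) c := mem_closedBall_self hc0
    have hz : z ∈ closedBall (0:ℂ) c := by
      rw [mem_closedBall_zero_iff] at hza hzb ⊢
      exact le_min hza hzb
    have hdd := diff_eq_of_exp_eq hconn ((hg1 a).mono hsub1) ((hg1 b).mono hsub2)
      (fun w hw => (hg2 a w (hsub1 hw)).trans (hg2 b w (hsub2 hw)).symm) hz h0
    rw [hg3 a, hg3 b] at hdd
    linarith [hdd]
  refine ⟨fun z => g ⌈‖z‖⌉₊ z, ?_, ?_⟩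
  · rw [continuous_iff_continuousAt]
    intro z₀
    set N : ℕ := ⌈‖z₀‖⌉₊ + 1 with hN_def
    have hz₀ : ‖z₀‖ < N := by
      calc ‖z₀‖ ≤ ⌈‖z₀‖⌉₊ := Nat.le_ceil _
      _ < N := by exact_mod_cast Nat.lt_succ_self _
    have hball : ball (0:ℂ) (N:ℝ) ∈ nhds z₀ :=
      isOpen_ball.mem_nhds (by rwa [mem_ball_zero_iff])
    have hcb : closedBall (0:ℂ) (N:ℝ) ∈ nhds z₀ :=
      Filter.mem_of_superset hball ball_subset_closedBall
    have hAt : ContinuousAt (g N) z₀ := (hg1 N).continuousAt hcb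
    apply hAt.congr
    filter_upwards [hball] with z hz
    apply agree N ⌈‖z‖⌉₊ z
    · exact ball_subset_closedBall hz
    · rw [mem_closedBall_zero_iff]; exact Nat.le_ceil _
  · intro z
    apply hg2
    rw [mem_closedBall_zero_iff]
    exact Nat.le_ceil _

set_option maxHeartbeats 1000000 in
/-- Unicoherence of the plane (open version): if two open preconnected sets cover `ℂ`,
their intersection is preconnected. -/
lemma unicoherence_plane {A B : Set ℂ} (hAo : IsOpen A) (hBo : IsOpen B)
    (hA : IsPreconnected A) (hB : IsPreconnected B) (hAB : A ∪ B = univ) :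
    IsPreconnected (A ∩ B) := by
  classical
  intro u v hu hv hsub hPne hQne
  obtain ⟨p, hp⟩ := hPne
  obtain ⟨q, hq⟩ := hQne
  by_contra hempty
  rw [Set.not_nonempty_iff_eq_empty] at hempty
  set s : Set ℂ := A ∩ B with hs_def
  set P : Set ℂ := s ∩ u with hP_def
  set Q : Set ℂ := s ∩ v with hQ_def
  have hPQdisj : P ∩ Q = ∅ := by
    rw [hP_def, hQ_def]
    rw [show s ∩ u ∩ (s ∩ v) = s ∩ (u ∩ v) by ext z; simp; tauto]
    exact hempty
  have hPQ : P ∪ Q = s := by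
    rw [hP_def, hQ_def, ← Set.inter_union_distrib_left]
    exact Set.inter_eq_self_of_subset_left hsub
  have hso : IsOpen s := hAo.inter hBo
  have hPo : IsOpen P := hso.inter hu
  have hQo : IsOpen Q := hso.inter hv
  have hqP : q ∉ P := by
    intro h
    have : q ∈ P ∩ Q := ⟨h, hq⟩
    rw [hPQdisj] at this
    exact this
  have hpQ : p ∉ Q := by
    intro h
    have : p ∈ P ∩ Q := ⟨hp, h⟩
    rw [hPQdisj] at this
    exact this
  -- Urysohn function
  have hdisjc : Disjoint (Bᶜ) (Aᶜ) := by
    rw [Set.disjoint_iff_inter_eq_empty, ← Set.compl_union, Set.union_comm, hAB, Set.compl_univ]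
  obtain ⟨w, hw0, hw1, hw01⟩ := exists_continuous_zero_one_of_isClosed
    hBo.isClosed_compl hAo.isClosed_compl hdisjc
  -- frontier facts
  have hfr : ∀ (T T' : Set ℂ), IsOpen T → IsOpen T' → T ∩ T' = ∅ → T ∪ T' = s →
      ∀ a ∈ frontier T, a ∉ s := by
    intro T T' hT hT' hTT' hTT's a ha has
    rw [hT.frontier_eq] at ha
    obtain ⟨hacl, haT⟩ := ha
    have haT' : a ∈ T' := by
      have : a ∈ T ∪ T' := hTT's ▸ has
      rcases this with h | h
      · exact absurd h haT
      · exact h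
    have hTcl : closure T ⊆ T'ᶜ := by
      apply closure_minimal _ hT'.isClosed_compl
      intro t ht ht'
      have hmem : t ∈ T ∩ T' := ⟨ht, ht'⟩
      rw [hTT'] at hmem
      exact hmem
    exact (hTcl hacl) haT'
  have hfrQ : ∀ a ∈ frontier Q, a ∉ s := by
    apply hfr Q P hQo hPo
    · rw [Set.inter_comm]; exact hPQdisj
    · rw [Set.union_comm]; exact hPQ
  have hfrP : ∀ a ∈ frontier P, a ∉ s := hfr P Q hPo hQo hPQdisj hPQ
  have hw_vals : ∀ a : ℂ, a ∉ s → w a = 0 ∨ w a = 1 := by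
    intro a ha
    rw [hs_def] at ha
    rcases not_and_or.mp ha with h | h
    · right; exact hw1 h
    · left; exact hw0 h
  -- the circle-valued function
  set θ : ℂ → ℝ := Q.piecewise (fun z => -(Real.pi * w z)) (fun z => Real.pi * w z) with hθ_def
  set F : ℂ → ℂ := fun z => Complex.exp ((θ z : ℝ) * Complex.I) with hF_def
  have hexp_eq : ∀ x : ℝ, x = 0 ∨ x = 1 →
      Complex.exp ((-(Real.pi * x) : ℝ) * Complex.I) =
      Complex.exp (((Real.pi * x) : ℝ) * Complex.I) := by
    rintro x (rfl | rfl)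
    · norm_num
    · have h1 : ((-(Real.pi * 1) : ℝ) : ℂ) * Complex.I = -(Real.pi * Complex.I) := by
        push_cast; ring
      have h2 : (((Real.pi * 1) : ℝ) : ℂ) * Complex.I = Real.pi * Complex.I := by
        push_cast; ring
      rw [h1, h2, Complex.exp_neg, Complex.exp_pi_mul_I]
      norm_num
  have hθcont : ContinuousOn θ A := by
    apply ContinuousOn.piecewise
    · intro a ⟨haA, hafr⟩
      have has := hfrQ a hafr
      have haB : a ∉ B := by
        intro h; exact has ⟨haA, h⟩
      have : w a = 0 := hw0 haB
      simp [this]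
    · exact (continuous_const.mul w.continuous).neg.continuousOn
    · exact (continuous_const.mul w.continuous).continuousOn
  have hFcont : Continuous F := by
    have : F = Q.piecewise (fun z => Complex.exp ((-(Real.pi * w z) : ℝ) * Complex.I))
        (fun z => Complex.exp (((Real.pi * w z) : ℝ) * Complex.I)) := by
      funext z
      by_cases hz : z ∈ Q
      · simp [hF_def, hθ_def, Set.piecewise_eq_of_mem _ _ _ hz]
      · simp [hF_def, hθ_def, Set.piecewise_eq_of_notMem _ _ _ hz]
    rw [this]
    apply Continuous.piecewise
    · intro a hafr
      have has := hfrQ a hafr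
      exact hexp_eq (w a) (hw_vals a has)
    · apply Continuous.cexp
      exact (Complex.continuous_ofReal.comp (continuous_const.mul w.continuous).neg).mul
        continuous_const
    · apply Continuous.cexp
      exact (Complex.continuous_ofReal.comp (continuous_const.mul w.continuous)).mul
        continuous_const
  have habsF : ∀ z, ‖F z‖ = 1 := by
    intro z
    rw [hF_def]
    exact Complex.norm_exp_ofReal_mul_I _
  have hθF : ∀ z, Complex.exp ((θ z : ℝ) * Complex.I) = F z := fun z => rfl
  -- the competing argument on B
  set η : ℂ → ℝ := P.piecewise (fun z => Real.pi * w z)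
      (fun z => 2 * Real.pi - Real.pi * w z) with hη_def
  have hηcont : ContinuousOn η B := by
    apply ContinuousOn.piecewise
    · intro a ⟨haB, hafr⟩
      have has := hfrP a hafr
      have haA : a ∉ A := by
        intro h; exact has ⟨h, haB⟩
      have : w a = 1 := hw1 haA
      simp [this]; ring
    · exact (continuous_const.mul w.continuous).continuousOn
    · exact (continuous_const.sub (continuous_const.mul w.continuous)).continuousOn
  have hηF : ∀ z ∈ B, Complex.exp ((η z : ℝ) * Complex.I) = F z := by
    intro z hzB
    by_cases hzP : z ∈ P
    · have hzQ : z ∉ Q := by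
        intro h
        have : z ∈ P ∩ Q := ⟨hzP, h⟩
        rw [hPQdisj] at this
        exact this
      rw [hη_def, Set.piecewise_eq_of_mem _ _ _ hzP, hF_def]
      simp only [hθ_def, Set.piecewise_eq_of_notMem _ _ _ hzQ]
    · rw [hη_def, Set.piecewise_eq_of_notMem _ _ _ hzP]
      have hexp2 : Complex.exp (((2 * Real.pi - Real.pi * w z : ℝ) : ℂ) * Complex.I) =
          Complex.exp ((-(Real.pi * w z) : ℝ) * Complex.I) := by
        have : ((2 * Real.pi - Real.pi * w z : ℝ) : ℂ) * Complex.I =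
            2 * Real.pi * Complex.I + ((-(Real.pi * w z) : ℝ) : ℂ) * Complex.I := by
          push_cast; ring
        rw [this, Complex.exp_add, Complex.exp_two_pi_mul_I, one_mul]
      rw [hexp2]
      by_cases hzQ : z ∈ Q
      · rw [hF_def]
        simp only [hθ_def, Set.piecewise_eq_of_mem _ _ _ hzQ]
      · have hzs : z ∉ s := by
          intro h
          have hPQ' : z ∈ P ∪ Q := hPQ ▸ h
          exact hPQ'.elim hzP hzQ
        have haA : z ∉ A := by
          intro h; exact hzs ⟨h, hzB⟩
        have hw1' : w z = 1 := hw1 haA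
        rw [hF_def]
        simp only [hθ_def, Set.piecewise_eq_of_notMem _ _ _ hzQ]
        rw [hw1']
        exact hexp_eq 1 (Or.inr rfl)
  -- global lift
  obtain ⟨g, hgc, hgF⟩ := exists_lift F hFcont habsF
  -- p, q memberships
  have hpP : p ∈ P := hp
  have hqQ : q ∈ Q := hq
  have hps : p ∈ s := hPQ ▸ Or.inl hpP
  have hqs : q ∈ s := hPQ ▸ Or.inr hqQ
  have hpA : p ∈ A := hps.1
  have hqA : q ∈ A := hqs.1
  have hpB : p ∈ B := hps.2
  have hqB : q ∈ B := hqs.2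
  -- constancy of differences
  have cA : g p - θ p = g q - θ q :=
    diff_eq_of_exp_eq hA hgc.continuousOn hθcont
      (fun z _ => (hgF z).trans (hθF z).symm) hpA hqA
  have cB : g p - η p = g q - η q :=
    diff_eq_of_exp_eq hB hgc.continuousOn hηcont
      (fun z hz => (hgF z).trans (hηF z hz).symm) hpB hqB
  -- evaluate
  have hθp : θ p = Real.pi * w p := by
    rw [hθ_def]; exact Set.piecewise_eq_of_notMem _ _ _ hpQ
  have hηp : η p = Real.pi * w p := by
    rw [hη_def]; exact Set.piecewise_eq_of_mem _ _ _ hpP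
  have hθq : θ q = -(Real.pi * w q) := by
    rw [hθ_def]; exact Set.piecewise_eq_of_mem _ _ _ hqQ
  have hηq : η q = 2 * Real.pi - Real.pi * w q := by
    rw [hη_def]; exact Set.piecewise_eq_of_notMem _ _ _ hqP
  have : (0:ℝ) = 2 * Real.pi := by
    have h1 : η p - θ p = η q - θ q := by linarith [cA, cB]
    rw [hθp, hηp, hθq, hηq] at h1
    linarith
  linarith [Real.pi_pos, this]

/-- If `U ⊆ ℝ²` is open and connected, `F₁ = ℝ² \ U`,
`F₂ ⊂ U` is a compact simple arc (whose complement in the plane is connected,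
by the Jordan arc theorem), and `F₁ ∩ F₂ = ∅`, then
`U \ F₂ = ℝ² \ (F₁ ∪ F₂)` is connected. -/
theorem complement_of_arc_in_open_connected (U : Set ℂ) (hU : IsOpen U)
    (hUconn : IsConnected U)
    (F₁ F₂ : Set ℂ) (hF₁ : F₁ = Uᶜ)
    (hF₂U : F₂ ⊆ U) (hF₂cpt : IsCompact F₂)
    (p : ℝ → ℂ) (hpc : ContinuousOn p (Set.Icc 0 1))
    (hpi : Set.InjOn p (Set.Icc 0 1)) (hparc : F₂ = p '' Set.Icc 0 1)
    (hF₂conn : IsConnected F₂ᶜ)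
    (hdisj : F₁ ∩ F₂ = ∅) :
    U \ F₂ = (F₁ ∪ F₂)ᶜ ∧ IsConnected (U \ F₂) := by
  have hF₂closed : IsClosed F₂ := hF₂cpt.isClosed
  have heq : U \ F₂ = (F₁ ∪ F₂)ᶜ := by
    rw [hF₁, Set.compl_union, compl_compl, Set.diff_eq]
  refine ⟨heq, ?_, ?_⟩
  · -- nonempty
    rw [Set.nonempty_iff_ne_empty]
    intro h
    have hUF : U = F₂ := Set.Subset.antisymm (by rwa [Set.diff_eq_empty] at h) hF₂U
    have hclopen : IsClopen U := ⟨by rw [hUF]; exact hF₂closed, hU⟩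
    rcases isClopen_iff.mp hclopen with h1 | h2
    · exact hUconn.nonempty.ne_empty h1
    · have hcpt : IsCompact (univ : Set ℂ) := by
        rw [← h2, hUF]; exact hF₂cpt
      exact noncompact_univ ℂ hcpt
  · -- preconnected
    have hunion : U ∪ F₂ᶜ = univ := by
      apply Set.eq_univ_of_forall
      intro z
      by_cases hz : z ∈ F₂
      · exact Or.inl (hF₂U hz)
      · exact Or.inr hz
    have hpre := unicoherence_plane hU hF₂closed.isOpen_compl hUconn.isPreconnected
      hF₂conn.isPreconnected hunion
    rw [Set.diff_eq]
    exact hpre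
end

section
/- Let f : ℂ → ℂ be harmonic and suppose {zₙ} satisfies zₙ → ∞, wₙ = f(zₙ) → w₀, and J_f(zₙ) > 0 for all n. Assume: (1) d({zₙ}, S) = δ > 0 where S is the critical set; (2) infₙ J_f(zₙ) = η² > 0; (3) there exists ρ ∈ (0, δ) with sup over n and z ∈ B(zₙ, ρ) of J_f(z)/J_f(zₙ) finite; and (4) supₙ {|μ_f(z)| : z ∈ closure of B(zₙ, ρ)} < 1. Then the cluster set C(f, ∞) has non-empty interior and Val(f, w) = ∞ for all w in some neighborhood of w₀. -/
open Filter

/-- The cluster set of `f` at infinity: finite values `w` for which there is a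
sequence `zₙ → ∞` with `f(zₙ) → w`. -/
def clusterSetInf (f : ℂ → ℂ) : Set ℂ :=
  {w : ℂ | ∃ z : ℕ → ℂ, Tendsto (fun n => ‖z n‖) atTop atTop ∧
    Tendsto (fun n => f (z n)) atTop (nhds w)}

open Metric Set
set_option maxHeartbeats 1000000

noncomputable def Lmap (a b : ℂ) : ℂ →L[ℝ] ℂ :=
  a • (1 : ℂ →L[ℝ] ℂ) + Complex.conjCLE.toContinuousLinearMap.comp (b • (1 : ℂ →L[ℝ] ℂ))

lemma Lmap_apply (a b v : ℂ) : Lmap a b v = a * v + (starRingEnd ℂ) (b * v) := by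
  simp [Lmap, Complex.conjCLE]

lemma Lmap_sub (a b a' b' : ℂ) : Lmap a b - Lmap a' b' = Lmap (a - a') (b - b') := by
  ext v
  simp only [ContinuousLinearMap.sub_apply, Lmap_apply, map_mul, map_sub]
  ring

lemma Lmap_norm_le (a b : ℂ) : ‖Lmap a b‖ ≤ ‖a‖ + ‖b‖ := by
  refine ContinuousLinearMap.opNorm_le_bound _ (by positivity) fun v => ?_
  rw [Lmap_apply]
  calc ‖a * v + (starRingEnd ℂ) (b * v)‖ ≤ ‖a * v‖ + ‖(starRingEnd ℂ) (b * v)‖ := norm_add_le _ _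
    _ = ‖a‖ * ‖v‖ + ‖b‖ * ‖v‖ := by
        simp [map_mul]
    _ = (‖a‖ + ‖b‖) * ‖v‖ := by ring

private lemma lmapinv_key (a b v : ℂ)
    (hD' : ((Complex.normSq a - Complex.normSq b : ℝ) : ℂ) ≠ 0) :
    a * ((((Complex.normSq a - Complex.normSq b : ℝ) : ℂ))⁻¹ *
      ((starRingEnd ℂ) a * v - (starRingEnd ℂ) b * (starRingEnd ℂ) v)) +
    (starRingEnd ℂ) (b * ((((Complex.normSq a - Complex.normSq b : ℝ) : ℂ))⁻¹ *
      ((starRingEnd ℂ) a * v - (starRingEnd ℂ) b * (starRingEnd ℂ) v))) = v := by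
  rw [show ((Complex.normSq a - Complex.normSq b : ℝ) : ℂ)
      = (starRingEnd ℂ) a * a - (starRingEnd ℂ) b * b by
    push_cast
    rw [Complex.normSq_eq_conj_mul_self, Complex.normSq_eq_conj_mul_self]] at *
  have hD2 : a * (starRingEnd ℂ) a - (starRingEnd ℂ) b * b ≠ 0 := by rwa [mul_comm a]
  have hx : (a * (starRingEnd ℂ) a - (starRingEnd ℂ) b * b) *
      (a * (starRingEnd ℂ) a - (starRingEnd ℂ) b * b)⁻¹ = 1 := mul_inv_cancel₀ hD2
  simp only [map_mul, map_sub, map_inv₀, Complex.conj_conj]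
  field_simp [hD2]
  ring

noncomputable def LmapInv (a b : ℂ) (hba : ‖b‖ < ‖a‖) :
    ContinuousLinearMap.NonlinearRightInverse (Lmap a b) where
  toFun v := (((Complex.normSq a - Complex.normSq b : ℝ) : ℂ))⁻¹ *
    ((starRingEnd ℂ) a * v - (starRingEnd ℂ) b * (starRingEnd ℂ) v)
  nnnorm := Real.toNNReal ((‖a‖ - ‖b‖)⁻¹)
  bound' := by
    intro v
    have hB : (0:ℝ) ≤ ‖b‖ := norm_nonneg b
    have hA : (0:ℝ) < ‖a‖ := lt_of_le_of_lt hB hba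
    have hD : (0:ℝ) < Complex.normSq a - Complex.normSq b := by
      have : Complex.normSq b < Complex.normSq a := by
        simpa [Complex.normSq_eq_norm_sq] using pow_lt_pow_left₀ hba hB two_ne_zero
      linarith
    rw [Real.coe_toNNReal _ (inv_nonneg.2 (by linarith))]
    have h1 : ‖(starRingEnd ℂ) a * v - (starRingEnd ℂ) b * (starRingEnd ℂ) v‖ ≤
        (‖a‖ + ‖b‖) * ‖v‖ := by
      calc ‖(starRingEnd ℂ) a * v - (starRingEnd ℂ) b * (starRingEnd ℂ) v‖
          ≤ ‖(starRingEnd ℂ) a * v‖ + ‖(starRingEnd ℂ) b * (starRingEnd ℂ) v‖ := norm_sub_le _ _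
        _ = ‖a‖ * ‖v‖ + ‖b‖ * ‖v‖ := by
            simp [map_mul]
        _ = (‖a‖ + ‖b‖) * ‖v‖ := by ring
    calc ‖(((Complex.normSq a - Complex.normSq b : ℝ) : ℂ))⁻¹ *
        ((starRingEnd ℂ) a * v - (starRingEnd ℂ) b * (starRingEnd ℂ) v)‖
        = (Complex.normSq a - Complex.normSq b)⁻¹ *
          ‖(starRingEnd ℂ) a * v - (starRingEnd ℂ) b * (starRingEnd ℂ) v‖ := by
          rw [norm_mul, norm_inv, Complex.norm_real, Real.norm_of_nonneg hD.le]
      _ ≤ (Complex.normSq a - Complex.normSq b)⁻¹ * ((‖a‖ + ‖b‖) * ‖v‖) :=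
          mul_le_mul_of_nonneg_left h1 (by positivity)
      _ = (‖a‖ - ‖b‖)⁻¹ * ‖v‖ := by
          rw [Complex.normSq_eq_norm_sq, Complex.normSq_eq_norm_sq]
          have hab : ‖a‖ - ‖b‖ ≠ 0 := by linarith
          have hab2 : ‖a‖ + ‖b‖ ≠ 0 := by positivity
          rw [show ‖a‖ ^ 2 - ‖b‖ ^ 2
              = (‖a‖ - ‖b‖) * (‖a‖ + ‖b‖) by ring]
          field_simp
  right_inv' := by
    intro v
    have hD : (Complex.normSq a - Complex.normSq b : ℝ) ≠ 0 := by
      have : Complex.normSq b < Complex.normSq a := by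
        simpa [Complex.normSq_eq_norm_sq] using
          pow_lt_pow_left₀ hba (norm_nonneg b) two_ne_zero
      linarith
    have hD' : ((Complex.normSq a - Complex.normSq b : ℝ) : ℂ) ≠ 0 := by exact_mod_cast hD
    rw [Lmap_apply]
    exact lmapinv_key a b v hD'

lemma hasFDerivAt_Lmap (h g : ℂ → ℂ) (hh : Differentiable ℂ h) (hg : Differentiable ℂ g)
    (z₀ : ℂ) : HasFDerivAt (fun ζ => h ζ + (starRingEnd ℂ) (g ζ))
      (Lmap (deriv h z₀) (deriv g z₀)) z₀ := by
  have H1 : HasFDerivAt h ((deriv h z₀) • (1 : ℂ →L[ℝ] ℂ)) z₀ :=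
    (hh z₀).hasDerivAt.complexToReal_fderiv
  have H2 : HasFDerivAt (fun ζ => (starRingEnd ℂ) (g ζ))
      (Complex.conjCLE.toContinuousLinearMap.comp ((deriv g z₀) • (1 : ℂ →L[ℝ] ℂ))) z₀ :=
    (Complex.conjCLE.toContinuousLinearMap.hasFDerivAt).comp z₀
      (hg z₀).hasDerivAt.complexToReal_fderiv
  exact H1.add H2

/-- Let `f = h + conj g` be harmonic on `ℂ` with Jacobian
`J = |h'|² - |g'|²` and critical set `S = {J = 0}`.  Suppose `zₙ → ∞`,
`f(zₙ) → w₀`, `J(zₙ) > 0`, and: (1) `d({zₙ}, S) = δ > 0`; (2) `infₙ J(zₙ) = η² > 0`;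
(3) there is `ρ ∈ (0,δ)` with `sup_{n, z ∈ B(zₙ,ρ)} J(z)/J(zₙ) < ∞`;
(4) `supₙ {|μ_f(z)| : z ∈ closure B(zₙ,ρ)} < 1`.  Then the cluster set
`C(f,∞)` has non-empty interior and `Val(f,w) = ∞` for all `w` in a
neighborhood of `w₀`. -/
theorem cluster_set_nonempty_interior (f h g : ℂ → ℂ)
    (hh : Differentiable ℂ h) (hg : Differentiable ℂ g)
    (hf : ∀ z, f z = h z + (starRingEnd ℂ) (g z))
    (J : ℂ → ℝ)
    (hJ : ∀ z, J z = ‖deriv h z‖ ^ 2 - ‖deriv g z‖ ^ 2)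
    (S : Set ℂ) (hS : S = {z : ℂ | J z = 0})
    (z : ℕ → ℂ) (w₀ : ℂ)
    (hzinf : Tendsto (fun n => ‖z n‖) atTop atTop)
    (hw : Tendsto (fun n => f (z n)) atTop (nhds w₀))
    (hJpos : ∀ n, 0 < J (z n))
    (δ : ℝ) (hδ : 0 < δ) (hdist : ∀ n, ∀ s ∈ S, δ ≤ dist (z n) s)
    (η : ℝ) (hη : 0 < η) (hJinf : ∀ n, η ^ 2 ≤ J (z n))
    (ρ : ℝ) (hρ0 : 0 < ρ) (hρδ : ρ < δ)
    (M₁ : ℝ) (hM₁ : ∀ n, ∀ ζ ∈ Metric.ball (z n) ρ, J ζ / J (z n) ≤ M₁)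
    (M : ℝ) (hM : M < 1)
    (hμ : ∀ n, ∀ ζ ∈ Metric.closedBall (z n) ρ,
      ‖(starRingEnd ℂ) (deriv g ζ) / deriv h ζ‖ ≤ M) :
    (interior (clusterSetInf f)).Nonempty ∧
      ∃ ε > (0 : ℝ), ∀ w ∈ Metric.ball w₀ ε, (f ⁻¹' {w}).Infinite := by
  -- basic facts
  have M0 : 0 ≤ M := le_trans (norm_nonneg _) (hμ 0 (z 0) (mem_closedBall_self hρ0.le))
  have hM2 : 0 < 1 - M ^ 2 := by nlinarith
  have hM₁1 : (1:ℝ) ≤ M₁ := by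
    have := hM₁ 0 (z 0) (mem_ball_self hρ0)
    rwa [div_self (hJpos 0).ne'] at this
  have hdh : Differentiable ℂ (deriv h) := by
    intro x
    have : AnalyticOnNhd ℂ h Set.univ := fun y _ => hh.analyticAt y
    exact (this.deriv x (Set.mem_univ x)).differentiableAt
  have hdg : Differentiable ℂ (deriv g) := by
    intro x
    have : AnalyticOnNhd ℂ g Set.univ := fun y _ => hg.analyticAt y
    exact (this.deriv x (Set.mem_univ x)).differentiableAt
  have hcJ : Continuous J := by
    have : J = fun ζ => ‖deriv h ζ‖ ^ 2 - ‖deriv g ζ‖ ^ 2 := funext hJ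
    rw [this]
    exact ((continuous_norm.comp (hdh.continuous)).pow 2).sub
      ((continuous_norm.comp hdg.continuous).pow 2)
  -- J is positive on all balls B(z n, ρ)
  have hJball : ∀ n, ∀ ζ ∈ Metric.ball (z n) ρ, 0 < J ζ := by
    intro n ζ hζ
    have hζS : ∀ ξ ∈ Metric.ball (z n) ρ, J ξ ≠ 0 := by
      intro ξ hξ h0
      have hmem : ξ ∈ S := by rw [hS]; exact h0
      have h1 := hdist n ξ hmem
      have h2 : dist ξ (z n) < ρ := mem_ball.mp hξ
      rw [dist_comm] at h2
      linarith
    by_contra hle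
    push_neg at hle
    have hneg : J ζ < 0 := lt_of_le_of_ne hle (hζS ζ hζ)
    set φ : ℝ → ℂ := fun t => z n + t • (ζ - z n) with hφ
    have hφc : ContinuousOn (fun t => J (φ t)) (Set.Icc (0:ℝ) 1) :=
      (hcJ.comp (by continuity)).continuousOn
    have hmemIcc : (0:ℝ) ∈ Set.Icc (J (φ 1)) (J (φ 0)) := by
      have h0 : φ 0 = z n := by simp [hφ]
      have h1 : φ 1 = ζ := by simp [hφ]
      rw [h0, h1]
      exact ⟨hneg.le, (hJpos n).le⟩
    obtain ⟨t, ht, hJt⟩ := intermediate_value_Icc' (by norm_num : (0:ℝ) ≤ 1) hφc hmemIcc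
    refine hζS (φ t) ?_ hJt
    rw [mem_ball]
    calc dist (φ t) (z n) = ‖t • (ζ - z n)‖ := by
          rw [dist_eq_norm]; congr 1; simp [hφ]
      _ = |t| * ‖ζ - z n‖ := by rw [norm_smul, Real.norm_eq_abs]
      _ ≤ 1 * ‖ζ - z n‖ := by
          apply mul_le_mul_of_nonneg_right _ (norm_nonneg _)
          rw [abs_of_nonneg ht.1]; exact ht.2
      _ = dist ζ (z n) := by rw [one_mul, dist_eq_norm]
      _ < ρ := mem_ball.mp hζ
  -- deriv h never vanishes on the balls
  have hane : ∀ n, ∀ ζ ∈ Metric.ball (z n) ρ, deriv h ζ ≠ 0 := by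
    intro n ζ hζ h0
    have := hJball n ζ hζ
    rw [hJ ζ, h0] at this
    simp only [norm_zero] at this
    nlinarith [norm_nonneg (deriv g ζ)]
  -- dilatation bound
  have hgle : ∀ n, ∀ ζ ∈ Metric.ball (z n) ρ,
      ‖deriv g ζ‖ ≤ M * ‖deriv h ζ‖ := by
    intro n ζ hζ
    have hne := hane n ζ hζ
    have := hμ n ζ (ball_subset_closedBall hζ)
    rw [norm_div, Complex.norm_conj] at this
    rw [div_le_iff₀ (norm_pos_iff.mpr hne)] at this
    linarith [this]
  have hmemball : ∀ n, z n ∈ Metric.ball (z n) ρ := fun n => mem_ball_self hρ0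
  have posa : ∀ n, η ≤ ‖deriv h (z n)‖ := by
    intro n
    have h1 := hJinf n
    rw [hJ (z n)] at h1
    have h2 : η ^ 2 ≤ ‖deriv h (z n)‖ ^ 2 := by
      nlinarith [norm_nonneg (deriv g (z n))]
    exact le_of_pow_le_pow_left₀ two_ne_zero (norm_nonneg _) h2
  have posa' : ∀ n, 0 < ‖deriv h (z n)‖ := fun n => lt_of_lt_of_le hη (posa n)
  -- constant C and the uniform derivative bound on balls
  set C : ℝ := Real.sqrt (M₁ / (1 - M ^ 2)) with hCdef
  have hC1 : 1 ≤ C := by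
    have h1 : (1:ℝ) ≤ M₁ / (1 - M ^ 2) := by
      rw [le_div_iff₀ hM2]
      nlinarith
    calc (1:ℝ) = Real.sqrt 1 := Real.sqrt_one.symm
      _ ≤ C := Real.sqrt_le_sqrt h1
  have hC0 : 0 < C := lt_of_lt_of_le one_pos hC1
  have hC2 : C ^ 2 = M₁ / (1 - M ^ 2) := Real.sq_sqrt (by positivity)
  have hsup : ∀ n, ∀ ζ ∈ Metric.ball (z n) ρ,
      ‖deriv h ζ‖ ≤ C * ‖deriv h (z n)‖ := by
    intro n ζ hζ
    have hgb := hgle n ζ hζ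
    have hJlb : (1 - M ^ 2) * ‖deriv h ζ‖ ^ 2 ≤ J ζ := by
      rw [hJ ζ]
      nlinarith [norm_nonneg (deriv h ζ), norm_nonneg (deriv g ζ)]
    have hJub : J ζ ≤ M₁ * J (z n) := by
      have := hM₁ n ζ hζ
      rwa [div_le_iff₀ (hJpos n)] at this
    have hJzn : J (z n) ≤ ‖deriv h (z n)‖ ^ 2 := by
      rw [hJ (z n)]
      nlinarith [norm_nonneg (deriv g (z n))]
    have hsq : ‖deriv h ζ‖ ^ 2 ≤ (C * ‖deriv h (z n)‖) ^ 2 := by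
      rw [mul_pow, hC2, div_mul_eq_mul_div, le_div_iff₀ hM2]
      nlinarith [hJpos n]
    exact le_of_pow_le_pow_left₀ two_ne_zero (by positivity) hsq
  have hsupg : ∀ n, ∀ ζ ∈ Metric.ball (z n) ρ,
      ‖deriv g ζ‖ ≤ C * ‖deriv h (z n)‖ := by
    intro n ζ hζ
    calc ‖deriv g ζ‖ ≤ M * ‖deriv h ζ‖ := hgle n ζ hζ
      _ ≤ 1 * (C * ‖deriv h (z n)‖) := by
          apply mul_le_mul hM.le (hsup n ζ hζ) (norm_nonneg _) zero_le_one
      _ = C * ‖deriv h (z n)‖ := one_mul _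
  -- Schwarz-lemma Lipschitz estimates for deriv h and deriv g on the balls
  have lipH : ∀ n, ∀ ζ ∈ Metric.ball (z n) ρ,
      dist (deriv h ζ) (deriv h (z n)) ≤
        3 * C * ‖deriv h (z n)‖ / ρ * dist ζ (z n) := by
    intro n ζ hζ
    apply Complex.dist_le_div_mul_dist_of_mapsTo_ball hdh.differentiableOn _ hζ
    intro ξ hξ
    rw [mem_closedBall]; apply le_of_lt
    calc dist (deriv h ξ) (deriv h (z n)) ≤ ‖deriv h ξ‖ + ‖deriv h (z n)‖ :=
          dist_le_norm_add_norm _ _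
      _ ≤ C * ‖deriv h (z n)‖ + ‖deriv h (z n)‖ := by
          exact add_le_add (hsup n ξ hξ) le_rfl
      _ < 3 * C * ‖deriv h (z n)‖ := by nlinarith [posa' n]
  have lipG : ∀ n, ∀ ζ ∈ Metric.ball (z n) ρ,
      dist (deriv g ζ) (deriv g (z n)) ≤
        3 * C * ‖deriv h (z n)‖ / ρ * dist ζ (z n) := by
    intro n ζ hζ
    apply Complex.dist_le_div_mul_dist_of_mapsTo_ball hdg.differentiableOn _ hζ
    intro ξ hξ
    rw [mem_closedBall]; apply le_of_lt
    calc dist (deriv g ξ) (deriv g (z n)) ≤ ‖deriv g ξ‖ + ‖deriv g (z n)‖ :=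
          dist_le_norm_add_norm _ _
      _ ≤ C * ‖deriv h (z n)‖ + C * ‖deriv h (z n)‖ := by
          exact add_le_add (hsupg n ξ hξ) (hsupg n (z n) (hmemball n))
      _ < 3 * C * ‖deriv h (z n)‖ := by nlinarith [posa' n]
  -- substitute f
  have hfe : f = fun ζ => h ζ + (starRingEnd ℂ) (g ζ) := funext hf
  subst hfe
  have hM1' : (0:ℝ) < 1 - M := by linarith
  -- the uniform radius r for the balls on which f is well-approximated
  set K : ℝ := 6 * C / ρ with hKdef
  have hK : 0 < K := by positivity
  set r : ℝ := min (ρ / 2) ((1 - M) / (2 * K)) with hrdef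
  have hr : 0 < r := lt_min (by positivity) (by positivity)
  have hrρ : r ≤ ρ / 2 := min_le_left _ _
  have hrK : K * r ≤ (1 - M) / 2 := by
    have h1 : r ≤ (1 - M) / (2 * K) := min_le_right _ _
    calc K * r ≤ K * ((1 - M) / (2 * K)) := mul_le_mul_of_nonneg_left h1 hK.le
      _ = (1 - M) / 2 := by field_simp
  -- derivative variation bound on the small balls
  have bnd : ∀ n, ∀ ξ ∈ Metric.closedBall (z n) r,
      ‖Lmap (deriv h ξ) (deriv g ξ) - Lmap (deriv h (z n)) (deriv g (z n))‖ ≤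
        (1 - M) * ‖deriv h (z n)‖ / 2 := by
    intro n ξ hξ
    have hd : dist ξ (z n) ≤ r := mem_closedBall.mp hξ
    have hξρ : ξ ∈ Metric.ball (z n) ρ := by
      rw [mem_ball]
      linarith [hρ0]
    rw [Lmap_sub]
    refine le_trans (Lmap_norm_le _ _) ?_
    have h1 := lipH n ξ hξρ
    have h2 := lipG n ξ hξρ
    rw [Complex.dist_eq] at h1 h2
    have h3 : 3 * C * ‖deriv h (z n)‖ / ρ * dist ξ (z n) ≤
        3 * C * ‖deriv h (z n)‖ / ρ * r := by
      apply mul_le_mul_of_nonneg_left hd (by positivity)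
    have h4 : 3 * C * ‖deriv h (z n)‖ / ρ * r +
        3 * C * ‖deriv h (z n)‖ / ρ * r = K * r * ‖deriv h (z n)‖ := by
      rw [hKdef]; field_simp; ring
    have h5 : K * r * ‖deriv h (z n)‖ ≤
        (1 - M) / 2 * ‖deriv h (z n)‖ :=
      mul_le_mul_of_nonneg_right hrK (norm_nonneg _)
    calc ‖deriv h ξ - deriv h (z n)‖ + ‖deriv g ξ - deriv g (z n)‖
        ≤ 3 * C * ‖deriv h (z n)‖ / ρ * r +
          3 * C * ‖deriv h (z n)‖ / ρ * r := by linarith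
      _ = K * r * ‖deriv h (z n)‖ := h4
      _ ≤ (1 - M) / 2 * ‖deriv h (z n)‖ := h5
      _ = (1 - M) * ‖deriv h (z n)‖ / 2 := by ring
  -- f is well approximated by its derivative at z n on the small balls
  have approx : ∀ n, ApproximatesLinearOn (fun ζ => h ζ + (starRingEnd ℂ) (g ζ))
      (Lmap (deriv h (z n)) (deriv g (z n))) (Metric.closedBall (z n) r)
      (Real.toNNReal ((1 - M) * ‖deriv h (z n)‖ / 2)) := by
    intro n x hx y hy
    set A := Lmap (deriv h (z n)) (deriv g (z n)) with hA
    have HD : ∀ ξ ∈ Metric.closedBall (z n) r,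
        HasFDerivWithinAt (fun ζ => (h ζ + (starRingEnd ℂ) (g ζ)) - A ζ)
          (Lmap (deriv h ξ) (deriv g ξ) - A) (Metric.closedBall (z n) r) ξ :=
      fun ξ _ => ((hasFDerivAt_Lmap h g hh hg ξ).sub A.hasFDerivAt).hasFDerivWithinAt
    have hmv := (convex_closedBall (z n) r).norm_image_sub_le_of_norm_hasFDerivWithin_le
      HD (bnd n) hy hx
    rw [Real.coe_toNNReal _ (by positivity)]
    have heq : (h x + (starRingEnd ℂ) (g x)) - (h y + (starRingEnd ℂ) (g y)) - A (x - y)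
        = ((h x + (starRingEnd ℂ) (g x)) - A x) - ((h y + (starRingEnd ℂ) (g y)) - A y) := by
      rw [map_sub]; abel
    calc ‖(h x + (starRingEnd ℂ) (g x)) - (h y + (starRingEnd ℂ) (g y)) - A (x - y)‖
        = ‖((h x + (starRingEnd ℂ) (g x)) - A x) - ((h y + (starRingEnd ℂ) (g y)) - A y)‖ := by
          rw [heq]
      _ ≤ (1 - M) * ‖deriv h (z n)‖ / 2 * ‖x - y‖ := hmv
  -- the dilatation at the centers
  have hba : ∀ n, ‖deriv g (z n)‖ < ‖deriv h (z n)‖ := by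
    intro n
    have := hgle n (z n) (hmemball n)
    nlinarith [posa' n]
  -- uniform covering radius
  set R₀ : ℝ := (1 - M) * η * r / 2 with hR₀def
  have hR₀pos : 0 < R₀ := by
    rw [hR₀def]
    positivity
  have key : ∀ n, ∀ w : ℂ, dist w (h (z n) + (starRingEnd ℂ) (g (z n))) ≤ R₀ →
      ∃ ζ, dist ζ (z n) ≤ r ∧ h ζ + (starRingEnd ℂ) (g ζ) = w := by
    intro n w hw'
    have hsurj := (approx n).surjOn_closedBall_of_nonlinearRightInverse
      (LmapInv (deriv h (z n)) (deriv g (z n)) (hba n)) hr.le Set.Subset.rfl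
    have hnn : (((LmapInv (deriv h (z n)) (deriv g (z n)) (hba n)).nnnorm : ℝ))⁻¹ =
        ‖deriv h (z n)‖ - ‖deriv g (z n)‖ := by
      show ((Real.toNNReal ((‖deriv h (z n)‖ -
        ‖deriv g (z n)‖)⁻¹) : ℝ))⁻¹ = _
      rw [Real.coe_toNNReal _ (inv_nonneg.2 (by linarith [hba n])), inv_inv]
    have hcoe : ((Real.toNNReal ((1 - M) * ‖deriv h (z n)‖ / 2) : ℝ)) =
        (1 - M) * ‖deriv h (z n)‖ / 2 :=
      Real.coe_toNNReal _ (by positivity)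
    have hrad : R₀ ≤ ((((LmapInv (deriv h (z n)) (deriv g (z n)) (hba n)).nnnorm : ℝ))⁻¹ -
        (Real.toNNReal ((1 - M) * ‖deriv h (z n)‖ / 2) : ℝ)) * r := by
      rw [hnn, hcoe]
      have hb := hgle n (z n) (hmemball n)
      have ha := posa n
      have hbr : (1 - M) * η / 2 ≤ ‖deriv h (z n)‖ -
          ‖deriv g (z n)‖ - (1 - M) * ‖deriv h (z n)‖ / 2 := by
        nlinarith
      calc R₀ = (1 - M) * η / 2 * r := by rw [hR₀def]; ring
        _ ≤ (‖deriv h (z n)‖ - ‖deriv g (z n)‖ -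
            (1 - M) * ‖deriv h (z n)‖ / 2) * r :=
          mul_le_mul_of_nonneg_right hbr hr.le
    have hwmem : w ∈ Metric.closedBall (h (z n) + (starRingEnd ℂ) (g (z n)))
        (((((LmapInv (deriv h (z n)) (deriv g (z n)) (hba n)).nnnorm : ℝ))⁻¹ -
          (Real.toNNReal ((1 - M) * ‖deriv h (z n)‖ / 2) : ℝ)) * r) :=
      mem_closedBall.mpr (le_trans hw' hrad)
    obtain ⟨ζ, hζ1, hζ2⟩ := hsurj hwmem
    exact ⟨ζ, mem_closedBall.mp hζ1, hζ2⟩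
  -- conclusion
  set ε : ℝ := R₀ / 2 with hεdef
  have hεpos : 0 < ε := half_pos hR₀pos
  have hNear : ∀ᶠ n in atTop,
      dist (h (z n) + (starRingEnd ℂ) (g (z n))) w₀ < ε :=
    Metric.tendsto_nhds.mp hw ε hεpos
  have getζ : ∀ w ∈ Metric.ball w₀ ε, ∀ Rb : ℝ,
      ∃ ζ, h ζ + (starRingEnd ℂ) (g ζ) = w ∧ Rb ≤ ‖ζ‖ := by
    intro w hwε Rb
    obtain ⟨n, hn1, hn2⟩ :=
      (hNear.and (hzinf.eventually (eventually_ge_atTop (Rb + r)))).exists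
    have hw2 : dist w (h (z n) + (starRingEnd ℂ) (g (z n))) ≤ R₀ := by
      have h6 := mem_ball.mp hwε
      have h7 : dist w (h (z n) + (starRingEnd ℂ) (g (z n))) ≤
          dist w w₀ + dist w₀ (h (z n) + (starRingEnd ℂ) (g (z n))) := dist_triangle _ _ _
      rw [dist_comm] at hn1
      have : dist w w₀ + dist w₀ (h (z n) + (starRingEnd ℂ) (g (z n))) < ε + ε := by
        exact add_lt_add h6 hn1
      have hεR : ε + ε = R₀ := by rw [hεdef]; ring
      linarith
    obtain ⟨ζ, hζr, hζw⟩ := key n w hw2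
    refine ⟨ζ, hζw, ?_⟩
    have h8 : ‖z n‖ - ‖ζ‖ ≤ ‖z n - ζ‖ := norm_sub_norm_le _ _
    have h9 : ‖z n - ζ‖ = dist ζ (z n) := by rw [dist_comm, dist_eq_norm]
    linarith
  constructor
  · have hsub : Metric.ball w₀ ε ⊆ clusterSetInf (fun ζ => h ζ + (starRingEnd ℂ) (g ζ)) := by
      intro w hwε
      choose ζseq hζ1 hζ2 using fun k : ℕ => getζ w hwε k
      refine ⟨ζseq, ?_, ?_⟩
      · exact tendsto_atTop_mono hζ2 tendsto_natCast_atTop_atTop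
      · have : (fun k => h (ζseq k) + (starRingEnd ℂ) (g (ζseq k))) = fun _ => w :=
          funext fun k => hζ1 k
        rw [this]
        exact tendsto_const_nhds
    exact ⟨w₀, interior_maximal hsub Metric.isOpen_ball (Metric.mem_ball_self hεpos)⟩
  · refine ⟨ε, hεpos, ?_⟩
    intro w hwε
    by_contra hfin
    rw [Set.not_infinite] at hfin
    obtain ⟨B, hB⟩ := (hfin.image (fun ζ => ‖ζ‖)).bddAbove
    obtain ⟨ζ, hζw, hζB⟩ := getζ w hwε (B + 1)
    have hmem : ζ ∈ (fun ζ => h ζ + (starRingEnd ℂ) (g ζ)) ⁻¹' {w} := by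
      simp only [Set.mem_preimage, Set.mem_singleton_iff]
      exact hζw
    have : ‖ζ‖ ≤ B := hB ⟨ζ, hmem, rfl⟩
    linarith
end

section
/- Let f : ℝ² → ℝ² be a C¹ map and γ : [0,∞) → ℝ² an injective continuous path with f(γ(t)) → w₀. Suppose that for some closed annulus A = {z : m ≤ |z| ≤ m+1}, every circle C_r = {|z| = r} with m ≤ r ≤ m+1 contains a point ζ_r with f(ζ_r) = w₀. Then there exists ζ ∈ A with f(ζ) = w₀ such that f is not injective on any neighborhood of ζ; consequently J_f(ζ) = 0 and w₀ ∈ f(S). -/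
open Filter

/-- The Jacobian determinant of `f : ℂ → ℂ` viewed as a map `ℝ² → ℝ²`. -/
noncomputable def Jdet (f : ℂ → ℂ) (z : ℂ) : ℝ :=
  LinearMap.det (fderiv ℝ f z : ℂ →ₗ[ℝ] ℂ)

/-- Let `f` be `C¹`, `γ` an injective continuous path with
`f(γ(t)) → w₀`, and suppose every circle `|z| = r` with `m ≤ r ≤ m+1` contains a
preimage `ζ_r` of `w₀`.  Then some `ζ` in the annulus `m ≤ |ζ| ≤ m+1` satisfies
`f(ζ) = w₀`, `f` is injective on no neighborhood of `ζ`, `J_f(ζ) = 0`, and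
`w₀ ∈ f(S)` where `S` is the critical set. -/
theorem annulus_accumulation_critical (f : ℂ → ℂ) (hf : ContDiff ℝ 1 f)
    (γ : ℝ → ℂ) (hγc : ContinuousOn γ (Set.Ici 0))
    (hγi : Set.InjOn γ (Set.Ici 0)) (w₀ : ℂ)
    (hlim : Tendsto (fun t => f (γ t)) atTop (nhds w₀))
    (m : ℝ)
    (hann : ∀ r : ℝ, m ≤ r → r ≤ m + 1 → ∃ ζ : ℂ, ‖ζ‖ = r ∧ f ζ = w₀) :
    ∃ ζ : ℂ, m ≤ ‖ζ‖ ∧ ‖ζ‖ ≤ m + 1 ∧ f ζ = w₀ ∧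
      (∀ U ∈ nhds ζ, ¬ Set.InjOn f U) ∧ Jdet f ζ = 0 ∧
      w₀ ∈ f '' {z : ℂ | Jdet f z = 0} := by
  have hfc : Continuous f := hf.continuous
  set K : Set ℂ := {z : ℂ | (m ≤ ‖z‖ ∧ ‖z‖ ≤ m + 1) ∧ f z = w₀} with hK
  -- K is compact
  have hKclosed : IsClosed K := by
    apply IsClosed.inter
    · exact IsClosed.inter (isClosed_le continuous_const continuous_norm)
        (isClosed_le continuous_norm continuous_const)
    · exact isClosed_eq hfc continuous_const
  have hKbdd : Bornology.IsBounded K := by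
    apply Bornology.IsBounded.subset (Metric.isBounded_closedBall (x := (0:ℂ)) (r := m + 1))
    intro z hz
    simpa [Metric.mem_closedBall, Complex.dist_eq] using hz.1.2
  have hKcompact : IsCompact K := Metric.isCompact_of_isClosed_isBounded hKclosed hKbdd
  -- K is infinite
  have hKinf : K.Infinite := by
    have h1 : Set.Icc m (m + 1) ⊆ (fun z : ℂ => ‖z‖) '' K := by
      intro r hr
      obtain ⟨ζ, hζ1, hζ2⟩ := hann r hr.1 hr.2
      exact ⟨ζ, ⟨⟨hζ1 ▸ hr.1, hζ1 ▸ hr.2⟩, hζ2⟩, hζ1⟩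
    have h2 : (Set.Icc m (m + 1)).Infinite := Set.Icc_infinite (by linarith)
    exact Set.Infinite.of_image _ (h2.mono h1)
  -- accumulation point
  obtain ⟨ζ, hζK, hacc⟩ := hKinf.exists_accPt_of_subset_isCompact hKcompact subset_rfl
  have hnoninj : ∀ U ∈ nhds ζ, ¬ Set.InjOn f U := by
    intro U hU hinj
    have h1 : U ∩ {ζ}ᶜ ∈ nhdsWithin ζ {ζ}ᶜ :=
      Filter.inter_mem (nhdsWithin_le_nhds hU) self_mem_nhdsWithin
    have h2 : (U ∩ {ζ}ᶜ) ∩ K ∈ (nhdsWithin ζ {ζ}ᶜ) ⊓ 𝓟 K :=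
      Filter.inter_mem_inf h1 (Filter.mem_principal_self K)
    obtain ⟨z, ⟨hzU, hzne⟩, hzK⟩ := hacc.nonempty_of_mem h2
    exact hzne (hinj hzU (mem_of_mem_nhds hU) (by rw [hzK.2, hζK.2]))
  -- Jdet = 0
  have hJ : Jdet f ζ = 0 := by
    by_contra hJ
    have hstrict : HasStrictFDerivAt f (fderiv ℝ f ζ) ζ :=
      hf.contDiffAt.hasStrictFDerivAt one_ne_zero
    set L := (fderiv ℝ f ζ : ℂ →ₗ[ℝ] ℂ)
    have hdet : LinearMap.det L ≠ 0 := hJ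
    let e : ℂ ≃ₗ[ℝ] ℂ := LinearMap.equivOfDetNeZero L hdet
    let E : ℂ ≃L[ℝ] ℂ := e.toContinuousLinearEquiv
    have hE : (E : ℂ →L[ℝ] ℂ) = fderiv ℝ f ζ := by
      ext x
      simp [E, e, L, LinearMap.equivOfDetNeZero]
    have hstrict' : HasStrictFDerivAt f (E : ℂ →L[ℝ] ℂ) ζ := hE ▸ hstrict
    have := hnoninj (hstrict'.toOpenPartialHomeomorph f).source
      ((hstrict'.toOpenPartialHomeomorph f).open_source.mem_nhds
        hstrict'.mem_toOpenPartialHomeomorph_source)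
    apply this
    have := (hstrict'.toOpenPartialHomeomorph f).injOn
    rwa [hstrict'.toOpenPartialHomeomorph_coe] at this
  exact ⟨ζ, hζK.1.1, hζK.1.2, hζK.2, hnoninj, hJ, ⟨ζ, hJ, hζK.2⟩⟩
end

section
/- For f(z) = e^x cos y + i·xy (z = x + iy), the cluster set at infinity equals the vertical strip {w : −1 ≤ Re w ≤ 1}: every w with |Re w| ≤ 1 is a limit of f(zₙ) with zₙ → ∞, and no w with |Re w| > 1 is such a limit. -/
open Filter

/-- For `f(z) = e^x cos y + i x y` (with `z = x + iy`), the
cluster set at infinity is exactly the vertical strip `{-1 ≤ Re w ≤ 1}`. -/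
theorem cluster_set_is_strip (f : ℂ → ℂ)
    (hf : ∀ z : ℂ, f z = (Real.exp z.re * Real.cos z.im : ℝ) +
      Complex.I * ((z.re * z.im : ℝ) : ℂ)) :
    clusterSetInf f = {w : ℂ | -1 ≤ w.re ∧ w.re ≤ 1} := by
  ext w
  simp only [clusterSetInf, Set.mem_setOf_eq]
  constructor
  · rintro ⟨z, hz, hlim⟩
    set x : ℕ → ℝ := fun n => (z n).re with hx
    set y : ℕ → ℝ := fun n => (z n).im with hy
    have hre : Tendsto (fun n => Real.exp (x n) * Real.cos (y n)) atTop (nhds w.re) := by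
      have h := (Complex.continuous_re.tendsto w).comp hlim
      have : (fun n => (f (z n)).re) = fun n => Real.exp (x n) * Real.cos (y n) := by
        funext n; rw [hf]
        simp only [Complex.add_re, Complex.ofReal_re, Complex.mul_re, Complex.I_re,
          Complex.I_im, Complex.ofReal_im]
        ring
      rwa [Function.comp_def, this] at h
    have him : Tendsto (fun n => x n * y n) atTop (nhds w.im) := by
      have h := (Complex.continuous_im.tendsto w).comp hlim
      have : (fun n => (f (z n)).im) = fun n => x n * y n := by
        funext n; rw [hf]
        simp only [Complex.add_im, Complex.ofReal_im, Complex.mul_im, Complex.I_re,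
          Complex.I_im, Complex.ofReal_re]
        ring
      rwa [Function.comp_def, this] at h
    have habs : |w.re| ≤ 1 := by
      by_contra hgt
      push_neg at hgt
      set c : ℝ := (1 + |w.re|) / 2 with hc_def
      have hc1 : 1 < c := by simp only [hc_def]; linarith
      have hcw : c < |w.re| := by simp only [hc_def]; linarith
      have hc0 : 0 < c := by linarith
      have hlog : 0 < Real.log c := Real.log_pos hc1
      set M : ℝ := |w.im| + 1 with hM_def
      have hM0 : 0 < M := by positivity
      have hev1 : ∀ᶠ n in atTop, c < |Real.exp (x n) * Real.cos (y n)| :=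
        hre.abs.eventually_const_lt hcw
      have hev2 : ∀ᶠ n in atTop, |x n * y n| < M :=
        him.abs.eventually_lt_const (by simp only [hM_def]; linarith)
      -- eventually x n > log c
      have hevx : ∀ᶠ n in atTop, Real.log c < x n := by
        filter_upwards [hev1] with n hn
        have h1 : |Real.exp (x n) * Real.cos (y n)| ≤ Real.exp (x n) := by
          rw [abs_mul, abs_of_pos (Real.exp_pos _)]
          calc Real.exp (x n) * |Real.cos (y n)| ≤ Real.exp (x n) * 1 := by
                exact mul_le_mul_of_nonneg_left (Real.abs_cos_le_one _) (Real.exp_pos _).le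
            _ = Real.exp (x n) := mul_one _
        have h2 : c < Real.exp (x n) := lt_of_lt_of_le hn h1
        have := Real.log_lt_log hc0 h2
        rwa [Real.log_exp] at this
      -- eventually |y n| ≤ M / log c
      have hevy : ∀ᶠ n in atTop, |y n| ≤ M / Real.log c := by
        filter_upwards [hevx, hev2] with n hn1 hn2
        have hx0 : 0 < x n := lt_trans hlog hn1
        have : |y n| * Real.log c ≤ |y n| * x n := by
          exact mul_le_mul_of_nonneg_left hn1.le (abs_nonneg _)
        have h2 : |y n| * x n = |x n * y n| := by
          rw [abs_mul, abs_of_pos hx0, mul_comm]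
        rw [le_div_iff₀ hlog]
        calc |y n| * Real.log c ≤ |x n * y n| := by rw [← h2]; exact this
          _ ≤ M := hn2.le
      -- x tends to atTop
      have hxtop : Tendsto x atTop atTop := by
        refine tendsto_atTop_mono' atTop (f₁ := fun n => ‖z n‖ - M / Real.log c) ?_ ?_
        · filter_upwards [hevx, hevy] with n hn1 hn2
          have hx0 : 0 < x n := lt_trans hlog hn1
          have hle : ‖z n‖ ≤ |x n| + |y n| := Complex.norm_le_abs_re_add_abs_im (z n)
          rw [abs_of_pos hx0] at hle
          linarith
        · have := tendsto_atTop_add_const_right atTop (-(M / Real.log c)) hz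
          simpa [sub_eq_add_neg] using this
      -- y tends to 0
      have hMdiv : Tendsto (fun n => M / x n) atTop (nhds 0) :=
        Tendsto.div_atTop tendsto_const_nhds hxtop
      have hMdiv' : Tendsto (fun n => -(M / x n)) atTop (nhds 0) := by
        simpa using hMdiv.neg
      have hy0 : Tendsto y atTop (nhds 0) := by
        apply tendsto_of_tendsto_of_tendsto_of_le_of_le' hMdiv' hMdiv
        · filter_upwards [hevx, hev2] with n hn1 hn2
          have hx0 : 0 < x n := lt_trans hlog hn1
          have : |y n| ≤ M / x n := by
            rw [le_div_iff₀ hx0]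
            calc |y n| * x n = |x n * y n| := by rw [abs_mul, abs_of_pos hx0, mul_comm]
              _ ≤ M := hn2.le
          linarith [neg_abs_le (y n)]
        · filter_upwards [hevx, hev2] with n hn1 hn2
          have hx0 : 0 < x n := lt_trans hlog hn1
          have : |y n| ≤ M / x n := by
            rw [le_div_iff₀ hx0]
            calc |y n| * x n = |x n * y n| := by rw [abs_mul, abs_of_pos hx0, mul_comm]
              _ ≤ M := hn2.le
          linarith [le_abs_self (y n)]
      have hcos1 : Tendsto (fun n => Real.cos (y n)) atTop (nhds 1) := by
        have := (Real.continuous_cos.tendsto 0).comp hy0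
        simpa [Function.comp_def] using this
      have hexp_top : Tendsto (fun n => Real.exp (x n)) atTop atTop :=
        Real.tendsto_exp_atTop.comp hxtop
      have hprod : Tendsto (fun n => Real.exp (x n) * Real.cos (y n)) atTop atTop :=
        hexp_top.atTop_mul_pos one_pos hcos1
      exact not_tendsto_nhds_of_tendsto_atTop hprod w.re hre
    exact abs_le.mp habs
  · rintro ⟨h1, h2⟩
    set a : ℝ := w.re with ha
    set b : ℝ := w.im with hb
    set y : ℕ → ℝ := fun n => Real.arccos a + ((n : ℝ) + 1) * (2 * Real.pi) with hy_def
    have hy_pos : ∀ n, 0 < y n := by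
      intro n
      have harc : 0 ≤ Real.arccos a := Real.arccos_nonneg a
      have hpp : (0 : ℝ) < ((n : ℝ) + 1) * (2 * Real.pi) := by positivity
      simp only [hy_def]; linarith
    have hyne : ∀ n, y n ≠ 0 := fun n => (hy_pos n).ne'
    have hy_ge : ∀ n : ℕ, (n : ℝ) ≤ y n := by
      intro n
      have harc : 0 ≤ Real.arccos a := Real.arccos_nonneg a
      have hpi : (3 : ℝ) < Real.pi := Real.pi_gt_three
      have hn0 : (0 : ℝ) ≤ (n : ℝ) := Nat.cast_nonneg n
      simp only [hy_def]
      nlinarith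
    have hy_top : Tendsto y atTop atTop :=
      tendsto_atTop_mono hy_ge tendsto_natCast_atTop_atTop
    have hcos : ∀ n, Real.cos (y n) = a := by
      intro n
      have heq : y n = Real.arccos a + ((((n : ℤ) + 1) : ℤ) : ℝ) * (2 * Real.pi) := by
        simp only [hy_def]; push_cast; ring
      rw [heq, Real.cos_add_int_mul_two_pi, Real.cos_arccos h1 h2]
    refine ⟨fun n => (↑(b / y n) + ↑(y n) * Complex.I : ℂ), ?_, ?_⟩
    · apply tendsto_atTop_mono _ tendsto_natCast_atTop_atTop
      intro n
      calc (n : ℝ) ≤ y n := hy_ge n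
        _ = |(↑(b / y n) + ↑(y n) * Complex.I : ℂ).im| := by
            simp [abs_of_pos (hy_pos n)]
        _ ≤ ‖(↑(b / y n) + ↑(y n) * Complex.I : ℂ)‖ := Complex.abs_im_le_norm _
    · have hfz : ∀ n, f (↑(b / y n) + ↑(y n) * Complex.I : ℂ)
          = ↑(Real.exp (b / y n) * a) + Complex.I * ↑b := by
        intro n
        rw [hf]
        simp [hcos n, div_mul_cancel₀ b (hyne n)]
      simp only [hfz]
      have hdiv : Tendsto (fun n => b / y n) atTop (nhds 0) :=
        Tendsto.div_atTop tendsto_const_nhds hy_top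
      have hexp : Tendsto (fun n => Real.exp (b / y n)) atTop (nhds 1) := by
        have := (Real.continuous_exp.tendsto 0).comp hdiv
        simpa [Function.comp_def] using this
      have hmul : Tendsto (fun n => Real.exp (b / y n) * a) atTop (nhds a) := by
        simpa using hexp.mul_const a
      have hcoe : Tendsto (fun n => (↑(Real.exp (b / y n) * a) : ℂ)) atTop (nhds (↑a : ℂ)) :=
        (Complex.continuous_ofReal.tendsto a).comp hmul
      have hw : ((a : ℂ) + Complex.I * (b : ℂ)) = w := by
        rw [mul_comm]; exact Complex.re_add_im w
      have := hcoe.add_const (Complex.I * (b : ℂ))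
      rwa [hw] at this
end

section
/- For f(z) = e^z + i·Im z and z_k = log((4k+3)π/2) + i(4k+3)π/2 (k ∈ ℤ⁺), on each closed ball B_k = closure of B(z_k, log(2)/2) the dilatation satisfies |μ_f(z)| = 1/|2e^z + 1| < 1/2, and J_f(z)/J_f(z_k) < 2 + 2√2/(3π). -/
open Real

lemma jdet_formula (f : ℂ → ℂ)
    (hf : ∀ z : ℂ, f z = Complex.exp z + Complex.I * ((z.im : ℝ) : ℂ)) (z : ℂ) :
    Jdet f z = Real.exp (2 * z.re) + Real.exp z.re * Real.cos z.im := by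
  set G : ℂ →L[ℝ] ℂ := Complex.I • (Complex.ofRealCLM.comp Complex.imCLM) with hGdef
  have hG : HasFDerivAt (fun w : ℂ => Complex.I * ((w.im : ℝ) : ℂ)) G z := by
    have := G.hasFDerivAt (x := z)
    convert this using 2
    simp [hGdef]
  have h1 := (Complex.hasDerivAt_exp z).complexToReal_fderiv
  have hF : HasFDerivAt f (Complex.exp z • (1 : ℂ →L[ℝ] ℂ) + G) z := by
    have : f = fun w => Complex.exp w + Complex.I * ((w.im : ℝ) : ℂ) := funext hf
    rw [this]
    exact h1.add hG
  rw [Jdet, hF.fderiv]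
  rw [← LinearMap.det_toMatrix Complex.basisOneI, Matrix.det_fin_two]
  simp [LinearMap.toMatrix_apply, hGdef, Complex.exp_re, Complex.exp_im]
  have h2 : rexp (z.re*2) = rexp z.re * rexp z.re := by
    rw [show z.re*2 = z.re+z.re by ring, Real.exp_add]
  ring_nf
  nlinarith [Real.sin_sq_add_cos_sq z.im, Real.exp_pos z.re, Real.exp_pos (z.re*2), sq_nonneg (Real.exp z.re)]

/-- For `f(z) = e^z + i Im z` and
`z_k = log((4k+3)π/2) + i (4k+3)π/2` (`k ∈ ℤ⁺`), on the closed ball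
`B_k = closedBall z_k (log 2 / 2)` the dilatation `μ_f(z) = (1/2)/(e^z + 1/2)`
satisfies `|μ_f(z)| = 1/|2e^z + 1| < 1/2`, and
`J_f(z)/J_f(z_k) < 2 + 2√2/(3π)`. -/
theorem dilatation_and_jacobian_bounds (f : ℂ → ℂ)
    (hf : ∀ z : ℂ, f z = Complex.exp z + Complex.I * ((z.im : ℝ) : ℂ)) :
    ∀ k : ℕ, 0 < k →
      ∀ zk : ℂ, zk = ((Real.log ((4 * (k : ℝ) + 3) * π / 2) : ℝ) : ℂ) +
          Complex.I * (((4 * (k : ℝ) + 3) * π / 2 : ℝ) : ℂ) →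
        ∀ z ∈ Metric.closedBall zk (Real.log 2 / 2),
          ‖((1 : ℂ) / 2) / (Complex.exp z + 1 / 2)‖ =
            1 / ‖2 * Complex.exp z + 1‖ ∧
          1 / ‖2 * Complex.exp z + 1‖ < 1 / 2 ∧
          Jdet f z / Jdet f zk < 2 + 2 * Real.sqrt 2 / (3 * π) := by
  intro k hk zk hzk z hz
  set c : ℝ := (4 * (k : ℝ) + 3) * π / 2 with hcdef
  have hπ : 0 < π := Real.pi_pos
  have hπ3 : 3 < π := Real.pi_gt_three
  have hk1 : (1 : ℝ) ≤ k := by exact_mod_cast hk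
  have hc7 : 7 * π / 2 ≤ c := by rw [hcdef]; nlinarith
  have hcpos : 0 < c := by nlinarith
  have hs0 : 0 < Real.sqrt 2 := Real.sqrt_pos.2 (by norm_num)
  have hs2 : Real.sqrt 2 ^ 2 = 2 := Real.sq_sqrt (by norm_num)
  have hexplog : Real.exp (Real.log 2 / 2) = Real.sqrt 2 := by
    rw [show Real.log 2 / 2 = Real.log (Real.sqrt 2) from (Real.log_sqrt (by norm_num)).symm,
      Real.exp_log hs0]
  have hzkre : zk.re = Real.log c := by
    simp [hzk]
  have hzkim : zk.im = c := by
    simp [hzk]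
  -- bound on z.re
  have hdist : ‖z - zk‖ ≤ Real.log 2 / 2 := by
    rw [← Complex.dist_eq]; exact Metric.mem_closedBall.mp hz
  have hre : |z.re - Real.log c| ≤ Real.log 2 / 2 := by
    have := Complex.abs_re_le_norm (z - zk)
    rw [Complex.sub_re, hzkre] at this
    exact this.trans hdist
  have hre1 : z.re ≤ Real.log c + Real.log 2 / 2 := by
    have := abs_le.mp hre; linarith [this.2]
  have hre2 : Real.log c - Real.log 2 / 2 ≤ z.re := by
    have := abs_le.mp hre; linarith [this.1]
  have hxhi : Real.exp z.re ≤ Real.sqrt 2 * c := by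
    calc Real.exp z.re ≤ Real.exp (Real.log c + Real.log 2 / 2) := Real.exp_le_exp.2 hre1
      _ = c * Real.sqrt 2 := by rw [Real.exp_add, Real.exp_log hcpos, hexplog]
      _ = Real.sqrt 2 * c := mul_comm _ _
  have hxlo : c / Real.sqrt 2 ≤ Real.exp z.re := by
    calc c / Real.sqrt 2 = Real.exp (Real.log c - Real.log 2 / 2) := by
          rw [Real.exp_sub, Real.exp_log hcpos, hexplog]
      _ ≤ Real.exp z.re := Real.exp_le_exp.2 hre2
  have he : c ≤ Real.exp z.re * Real.sqrt 2 := (div_le_iff₀ hs0).mp hxlo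
  -- part 1
  have part1 : ‖((1 : ℂ) / 2) / (Complex.exp z + 1 / 2)‖ =
      1 / ‖2 * Complex.exp z + 1‖ := by
    have h : Complex.exp z + 1 / 2 = (2 * Complex.exp z + 1) / 2 := by ring
    rw [h, norm_div, norm_div, norm_div]
    simp
    ring
  -- part 2
  have habs : 2 < ‖2 * Complex.exp z + 1‖ := by
    have htri := norm_add_le (2 * Complex.exp z + 1) (-1)
    have hsimp : (2 * Complex.exp z + 1) + (-1) = 2 * Complex.exp z := by ring
    rw [hsimp] at htri
    have h2e : ‖2 * Complex.exp z‖ = 2 * Real.exp z.re := by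
      rw [norm_mul, Complex.norm_exp]; norm_num
    rw [h2e] at htri
    have hone : ‖(-1 : ℂ)‖ = 1 := by simp
    rw [hone] at htri
    -- 2 e^x ≤ |2e^z+1| + 1, and e^x > 3/2
    have hex : (3:ℝ)/2 < Real.exp z.re := by
      nlinarith [sq_nonneg (Real.sqrt 2 - 3/2)]
    linarith
  have part2 : 1 / ‖2 * Complex.exp z + 1‖ < 1 / 2 := by
    rw [div_lt_div_iff₀ (by linarith) two_pos]; linarith
  -- part 3
  have hJz := jdet_formula f hf z
  have hJzk := jdet_formula f hf zk
  have hcos : Real.cos c = 0 := by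
    have : c = 3 * π / 2 + (k : ℝ) * (2 * π) := by rw [hcdef]; ring
    rw [this]
    rw [show ((k : ℝ) * (2 * π)) = ((k : ℤ) : ℝ) * (2 * π) by push_cast; ring]
    rw [Real.cos_add_int_mul_two_pi]
    rw [show (3:ℝ) * π / 2 = π + π / 2 by ring]
    simp [Real.cos_add]
  have hJzkval : Jdet f zk = c ^ 2 := by
    rw [hJzk, hzkre, hzkim, hcos, mul_zero, add_zero,
      show 2 * Real.log c = Real.log c + Real.log c by ring, Real.exp_add, Real.exp_log hcpos]
    ring
  have hJzle : Jdet f z ≤ 2 * c ^ 2 + Real.sqrt 2 * c := by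
    rw [hJz, show 2 * z.re = z.re + z.re by ring, Real.exp_add]
    nlinarith [Real.cos_le_one z.im, Real.exp_pos z.re, hxhi, hs2, hcpos]
  have h3 : Real.sqrt 2 * c < 2 * Real.sqrt 2 / (3 * π) * c ^ 2 := by
    rw [div_mul_eq_mul_div, lt_div_iff₀ (by positivity)]
    have h2c : 3 * π < 2 * c := by linarith
    calc Real.sqrt 2 * c * (3 * π) = (Real.sqrt 2 * c) * (3 * π) := by ring
      _ < (Real.sqrt 2 * c) * (2 * c) := by
          exact mul_lt_mul_of_pos_left h2c (mul_pos hs0 hcpos)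
      _ = 2 * Real.sqrt 2 * c ^ 2 := by ring
  refine ⟨part1, part2, ?_⟩
  rw [hJzkval, div_lt_iff₀ (by positivity)]
  calc Jdet f z ≤ 2 * c ^ 2 + Real.sqrt 2 * c := hJzle
    _ < 2 * c ^ 2 + 2 * Real.sqrt 2 / (3 * π) * c ^ 2 := by linarith
    _ = (2 + 2 * Real.sqrt 2 / (3 * π)) * c ^ 2 := by ring
end
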